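/- arXiv:1610.01098 — 10 statements merged into one kernel-verified Lean document; each statement's English description precedes it below -/
import Mathlib

section
/- Let g be a real Lie algebra containing elements u, v, w with [u,v] = A·v + B·w, [u,w] = -B·v + A·w, [v,w] = c₁·u + c₂·v + c₃·w for reals A, B, c₁, c₂, c₃ (with arbitrary remaining brackets determined by antisymmetry in span{u,v,w}). On the product Lie algebra g × g, define the linear map 𝒥 by 𝒥(u,0) = (0,u), 𝒥(0,u) = (-u,0), 𝒥(v,0) = (w,0), 𝒥(w,0) = (-v,0), 𝒥(0,v) = (0,w), 𝒥(0,w) = (0,-v). Then 𝒥² = -id on the span of these six vectors, and the Nijenhuis tensor of 𝒥 vanishes on the pair ((u,0),(v,0)). -/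
/-- Componentwise bracket on the product. -/
instance prodBracket {L : Type*} [LieRing L] : Bracket (L × L) (L × L) :=
  ⟨fun x y => (⁅x.1, y.1⁆, ⁅x.2, y.2⁆)⟩

instance prodLieRing {L : Type*} [LieRing L] : LieRing (L × L) where
  add_lie x y z := by ext <;> simp [Bracket.bracket]
  lie_add x y z := by ext <;> simp [Bracket.bracket]
  lie_self x := by ext <;> simp [Bracket.bracket]
  leibniz_lie x y z := by ext <;> simp [Bracket.bracket]

instance prodLieAlgebra {L : Type*} [LieRing L] [LieAlgebra ℝ L] : LieAlgebra ℝ (L × L) where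
  lie_smul t x y := by ext <;> simp [Bracket.bracket]

theorem complex_eigenvalue_case_nijenhuis_uv {g : Type*} [LieRing g] [LieAlgebra ℝ g]
    (u v w : g) (A B c₁ c₂ c₃ : ℝ)
    (huv : ⁅u, v⁆ = A • v + B • w)
    (huw : ⁅u, w⁆ = -B • v + A • w)
    (hvw : ⁅v, w⁆ = c₁ • u + c₂ • v + c₃ • w)
    (𝒥 : (g × g) →ₗ[ℝ] (g × g))
    (h1 : 𝒥 (u, 0) = (0, u)) (h2 : 𝒥 (0, u) = (-u, 0))
    (h3 : 𝒥 (v, 0) = (w, 0)) (h4 : 𝒥 (w, 0) = (-v, 0))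
    (h5 : 𝒥 (0, v) = (0, w)) (h6 : 𝒥 (0, w) = (0, -v)) :
    (∀ x ∈ Submodule.span ℝ
        ({(u, 0), (0, u), (v, 0), (w, 0), (0, v), (0, w)} : Set (g × g)),
      𝒥 (𝒥 x) = -x) ∧
    ⁅((u, 0) : g × g), ((v, 0) : g × g)⁆ + 𝒥 ⁅𝒥 (u, 0), ((v, 0) : g × g)⁆
      + 𝒥 ⁅((u, 0) : g × g), 𝒥 (v, 0)⁆ - ⁅𝒥 (u, 0), 𝒥 (v, 0)⁆ = 0 := by
  constructor
  · intro x hx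
    induction hx using Submodule.span_induction with
    | mem x hx =>
      rcases hx with h|h|h|h|h|h <;> subst h <;>
        simp only [show ∀ a : g, ((-a, (0:g)) : g × g) = -(a, 0) from fun a => by simp,
          show ∀ a : g, (((0:g), -a) : g × g) = -(0, a) from fun a => by simp,
          h1, h2, h3, h4, h5, h6, map_neg] <;> simp [h1, h2, h3, h4, h5, h6]
    | zero => simp
    | add a b _ _ ha hb => simp [map_add, ha, hb]; abel
    | smul t a _ ha => simp [map_smul, ha]
  · have e1 : ⁅((u, 0) : g × g), ((v, 0) : g × g)⁆ = (A • v + B • w, 0) := by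
      show ((⁅u, v⁆ : g), (⁅(0:g), (0:g)⁆ : g)) = _
      simp [huv]
    have e2 : ⁅((0, u) : g × g), ((v, 0) : g × g)⁆ = 0 := by
      show ((⁅(0:g), v⁆ : g), (⁅u, (0:g)⁆ : g)) = _
      simp [Prod.ext_iff]
    have e3 : ⁅((u, 0) : g × g), ((w, 0) : g × g)⁆ = (-B • v + A • w, 0) := by
      show ((⁅u, w⁆ : g), (⁅(0:g), (0:g)⁆ : g)) = _
      simp [huw]
    have e4 : ⁅((0, u) : g × g), ((w, 0) : g × g)⁆ = ((⁅(0:g), w⁆ : g), (⁅u, (0:g)⁆ : g)) := rfl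
    have hsum : ((-B • v + A • w, 0) : g × g) = (-B) • (v, 0) + A • (w, 0) := by
      simp [Prod.ext_iff]
    rw [h1, h3, e1, e2, e3, hsum, map_zero, map_add, map_smul, map_smul, h3, h4, e4]
    simp [Prod.ext_iff]
end

section
/- Let g be a real Lie algebra with basis u, v, w satisfying [u,v] = α·v, [u,w] = α·w, [v,w] = 0 for a real number α. Define 𝒥 on g × g by 𝒥(u,0) = (0,u), 𝒥(0,u) = (-u,0), 𝒥(v,0) = (w,0), 𝒥(w,0) = (-v,0), 𝒥(0,v) = (0,w), 𝒥(0,w) = (0,-v). Then 𝒥² = -id and the Nijenhuis tensor of 𝒥 vanishes identically, i.e. 𝒥 is an integrable complex structure on g × g. -/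
set_option maxHeartbeats 1000000

theorem real_eigenvalue_case_integrable {g : Type*} [LieRing g] [LieAlgebra ℝ g]
    (b : Module.Basis (Fin 3) ℝ g) (α : ℝ)
    (huv : ⁅b 0, b 1⁆ = α • b 1)
    (huw : ⁅b 0, b 2⁆ = α • b 2)
    (hvw : ⁅b 1, b 2⁆ = 0)
    (𝒥 : (g × g) →ₗ[ℝ] (g × g))
    (h1 : 𝒥 (b 0, 0) = (0, b 0)) (h2 : 𝒥 (0, b 0) = (-b 0, 0))
    (h3 : 𝒥 (b 1, 0) = (b 2, 0)) (h4 : 𝒥 (b 2, 0) = (-b 1, 0))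
    (h5 : 𝒥 (0, b 1) = (0, b 2)) (h6 : 𝒥 (0, b 2) = (0, -b 1)) :
    (∀ x : g × g, 𝒥 (𝒥 x) = -x) ∧
    (∀ x y : g × g,
      ⁅x, y⁆ + 𝒥 ⁅𝒥 x, y⁆ + 𝒥 ⁅x, 𝒥 y⁆ - ⁅𝒥 x, 𝒥 y⁆ = 0) := by
  have bp : ∀ (a c : g) (d e : g), ⁅(a, c), (d, e)⁆ = (⁅a, d⁆, ⁅c, e⁆) := fun _ _ _ _ => rfl
  have hvu : ⁅b 1, b 0⁆ = -(α • b 1) := by rw [← lie_skew, huv]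
  have hwu : ⁅b 2, b 0⁆ = -(α • b 2) := by rw [← lie_skew, huw]
  have hwv : ⁅b 2, b 1⁆ = 0 := by rw [← lie_skew, hvw, neg_zero]
  have h1' : 𝒥 (-b 0, 0) = (0, -b 0) := by
    have : ((-b 0 : g), (0:g)) = -(b 0, 0) := by simp
    rw [this, map_neg, h1]; simp
  have h4' : 𝒥 (-b 1, 0) = (-b 2, 0) := by
    have : ((-b 1 : g), (0:g)) = -(b 1, 0) := by simp
    rw [this, map_neg, h3]; simp
  have h6' : 𝒥 (0, -b 1) = (0, -b 2) := by
    have : ((0:g), (-b 1 : g)) = -(0, b 1) := by simp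
    rw [this, map_neg, h5]; simp
  have part1 : ∀ x : g × g, 𝒥 (𝒥 x) = -x := by
    have hext : (𝒥 ∘ₗ 𝒥) = -(LinearMap.id) := by
      apply Module.Basis.ext (b.prod b)
      rintro (i | i) <;> fin_cases i <;>
        simp [Module.Basis.prod_apply, h1, h2, h3, h4, h5, h6, h1', h4', h6']
    intro x
    have := LinearMap.congr_fun hext x
    simpa using this
  refine ⟨part1, ?_⟩
  -- smul lemmas for 𝒥
  have JA : ∀ t : ℝ, 𝒥 (t • b 1, 0) = (t • b 2, 0) := by
    intro t
    have : ((t • b 1 : g), (0:g)) = t • (b 1, 0) := by simp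
    rw [this, map_smul, h3]; simp
  have JB : ∀ t : ℝ, 𝒥 (t • b 2, 0) = (-(t • b 1), 0) := by
    intro t
    have : ((t • b 2 : g), (0:g)) = t • (b 2, 0) := by simp
    rw [this, map_smul, h4]; simp
  have JC : ∀ t : ℝ, 𝒥 (0, t • b 1) = (0, t • b 2) := by
    intro t
    have : ((0:g), (t • b 1 : g)) = t • (0, b 1) := by simp
    rw [this, map_smul, h5]; simp
  have JD : ∀ t : ℝ, 𝒥 (0, t • b 2) = (0, -(t • b 1)) := by
    intro t
    have : ((0:g), (t • b 2 : g)) = t • (0, b 2) := by simp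
    rw [this, map_smul, h6]; simp
  have JA' : ∀ t : ℝ, 𝒥 (-(t • b 1), 0) = (-(t • b 2), 0) := by
    intro t
    have : ((-(t • b 1) : g), (0:g)) = -(t • b 1, 0) := by simp
    rw [this, map_neg, JA]; simp
  have JB' : ∀ t : ℝ, 𝒥 (-(t • b 2), 0) = (t • b 1, 0) := by
    intro t
    have : ((-(t • b 2) : g), (0:g)) = -(t • b 2, 0) := by simp
    rw [this, map_neg, JB]; simp
  have JC' : ∀ t : ℝ, 𝒥 (0, -(t • b 1)) = (0, -(t • b 2)) := by
    intro t
    have : ((0:g), (-(t • b 1) : g)) = -(0, t • b 1) := by simp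
    rw [this, map_neg, JC]; simp
  have JD' : ∀ t : ℝ, 𝒥 (0, -(t • b 2)) = (0, t • b 1) := by
    intro t
    have : ((0:g), (-(t • b 2) : g)) = -(0, t • b 2) := by simp
    rw [this, map_neg, JD]; simp
  set N : (g × g) →ₗ[ℝ] (g × g) →ₗ[ℝ] (g × g) :=
    LinearMap.mk₂ ℝ
      (fun x y => ⁅x, y⁆ + 𝒥 ⁅𝒥 x, y⁆ + 𝒥 ⁅x, 𝒥 y⁆ - ⁅𝒥 x, 𝒥 y⁆)
      (by intro x x' y; simp only [map_add, add_lie]; abel)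
      (by intro t x y; simp only [map_smul, smul_lie, smul_add, smul_sub])
      (by intro x y y'; simp only [map_add, lie_add]; abel)
      (by intro t x y; simp only [map_smul, lie_smul, smul_add, smul_sub])
    with hNdef
  have hI : ∀ i, (b.prod b) (Sum.inl i) = (b i, 0) := fun i => by
    simp [Module.Basis.prod_apply]
  have hR : ∀ i, (b.prod b) (Sum.inr i) = (0, b i) := fun i => by
    simp [Module.Basis.prod_apply]
  have hN : N = 0 := by
    apply LinearMap.ext_basis (b.prod b) (b.prod b)
    intro i j
    rw [hNdef]
    simp only [LinearMap.mk₂_apply, LinearMap.zero_apply]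
    rcases i with i | i <;> rcases j with j | j <;> fin_cases i <;> fin_cases j <;>
      simp [hI, hR, bp, huv, huw, hvw, hvu, hwu, hwv,
        h1, h2, h3, h4, h5, h6, h1', h4', h6', JA, JB, JC, JD, JA', JB', JC', JD',
        lie_neg, neg_lie, smul_neg,
        (by rw [Prod.mk_zero_zero]; exact map_zero 𝒥 : 𝒥 ((0:g), (0:g)) = 0)]
  intro x y
  have h := LinearMap.congr_fun (LinearMap.congr_fun hN x) y
  rw [hNdef] at h
  simpa only [LinearMap.mk₂_apply, LinearMap.zero_apply] using h
end

section
/- Let g be the 3-dimensional real Heisenberg Lie algebra (basis e₁, e₂, e₃ with [e₁,e₂] = e₃ and all other basis brackets zero). Then g × g admits an integrable complex structure. -/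
theorem heisenberg_product_admits {g : Type*} [LieRing g] [LieAlgebra ℝ g]
    (b : Module.Basis (Fin 3) ℝ g) 
    (h12 : ⁅b 0, b 1⁆ = b 2) (h13 : ⁅b 0, b 2⁆ = 0) (h23 : ⁅b 1, b 2⁆ = 0) :
    ∃ 𝒥 : (g × g) →ₗ[ℝ] (g × g), (∀ x, 𝒥 (𝒥 x) = -x) ∧
      ∀ x y : g × g,
        ⁅x, y⁆ + 𝒥 ⁅𝒥 x, y⁆ + 𝒥 ⁅x, 𝒥 y⁆ - ⁅𝒥 x, 𝒥 y⁆ = 0 := by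
  classical
  have h10 : ⁅b 1, b 0⁆ = -b 2 := by rw [← lie_skew, h12]
  have h20 : ⁅b 2, b 0⁆ = 0 := by rw [← lie_skew, h13, neg_zero]
  have h21 : ⁅b 2, b 1⁆ = 0 := by rw [← lie_skew, h23, neg_zero]
  -- the bracket in coordinates
  have hbr : ∀ p q r s t u : ℝ,
      ⁅p • b 0 + q • b 1 + r • b 2, s • b 0 + t • b 1 + u • b 2⁆
        = (p * t - q * s) • b 2 := by
    intro p q r s t u
    simp only [add_lie, lie_add, smul_lie, lie_smul, h12, h13, h23, h10, h20, h21,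
      lie_self, smul_zero, smul_neg, add_zero, zero_add, sub_smul, smul_smul]
    module
  set A : g →ₗ[ℝ] g := b.constr ℝ ![b 1, -b 0, 0] with hAdef
  set B : g →ₗ[ℝ] g := b.constr ℝ ![0, 0, b 2] with hBdef
  have hA0 : A (b 0) = b 1 := by simp [hAdef, Module.Basis.constr_basis]
  have hA1 : A (b 1) = -b 0 := by simp [hAdef, Module.Basis.constr_basis]
  have hA2 : A (b 2) = 0 := by simp [hAdef, Module.Basis.constr_basis]
  have hB0 : B (b 0) = 0 := by simp [hBdef, Module.Basis.constr_basis]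
  have hB1 : B (b 1) = 0 := by simp [hBdef, Module.Basis.constr_basis]
  have hB2 : B (b 2) = b 2 := by simp [hBdef, Module.Basis.constr_basis]
  have hx : ∀ x : g, x = b.repr x 0 • b 0 + b.repr x 1 • b 1 + b.repr x 2 • b 2 := by
    intro x
    have := b.sum_repr x
    rw [Fin.sum_univ_three] at this
    exact this.symm
  have hAx : ∀ x : g,
      A x = (-(b.repr x 1)) • b 0 + (b.repr x 0) • b 1 + (0 : ℝ) • b 2 := by
    intro x
    conv_lhs => rw [hx x]
    rw [map_add, map_add, map_smul, map_smul, map_smul, hA0, hA1, hA2]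
    module
  have hBx : ∀ x : g,
      B x = (0 : ℝ) • b 0 + (0 : ℝ) • b 1 + (b.repr x 2) • b 2 := by
    intro x
    conv_lhs => rw [hx x]
    rw [map_add, map_add, map_smul, map_smul, map_smul, hB0, hB1, hB2]
    module
  -- combined forms appearing in 𝒥
  have hAmB : ∀ x y : g, A x - B y
      = (-(b.repr x 1)) • b 0 + (b.repr x 0) • b 1 + (-(b.repr y 2)) • b 2 := by
    intro x y; rw [hAx, hBx]; module
  have hBpA : ∀ x y : g, B x + A y
      = (-(b.repr y 1)) • b 0 + (b.repr y 0) • b 1 + (b.repr x 2) • b 2 := by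
    intro x y; rw [hBx, hAx]; module
  have hAs : ∀ (α : ℝ), A (α • b 2) = 0 := by
    intro α; rw [map_smul, hA2, smul_zero]
  have hBs : ∀ (α : ℝ), B (α • b 2) = α • b 2 := by
    intro α; rw [map_smul, hB2]
  refine ⟨LinearMap.prod
      (A ∘ₗ LinearMap.fst ℝ g g - B ∘ₗ LinearMap.snd ℝ g g)
      (B ∘ₗ LinearMap.fst ℝ g g + A ∘ₗ LinearMap.snd ℝ g g), ?_, ?_⟩
  · rintro ⟨x₁, x₂⟩
    have hAA : ∀ x : g, A (A x) = -((b.repr x 0) • b 0 + (b.repr x 1) • b 1) := by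
      intro x
      rw [hAx x, map_add, map_add, map_smul, map_smul, map_smul, hA0, hA1, hA2]
      module
    have hAB : ∀ x : g, A (B x) = 0 := by
      intro x
      rw [hBx x, map_add, map_add, map_smul, map_smul, map_smul, hA0, hA1, hA2]
      module
    have hBA : ∀ x : g, B (A x) = 0 := by
      intro x
      rw [hAx x, map_add, map_add, map_smul, map_smul, map_smul, hB0, hB1, hB2]
      module
    have hBB : ∀ x : g, B (B x) = (b.repr x 2) • b 2 := by
      intro x
      rw [hBx x, map_add, map_add, map_smul, map_smul, map_smul, hB0, hB1, hB2]
      module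
    simp only [LinearMap.prod_apply, LinearMap.sub_apply, LinearMap.add_apply,
      LinearMap.comp_apply, LinearMap.fst_apply, LinearMap.snd_apply, Function.prod,
      Prod.neg_mk, map_sub, map_add]
    rw [Prod.mk.injEq]
    constructor
    · rw [hAA, hAB, hBA, hBB]
      conv_rhs => rw [hx x₁]
      module
    · rw [hAA, hAB, hBA, hBB]
      conv_rhs => rw [hx x₂]
      module
  · rintro ⟨x₁, x₂⟩ ⟨y₁, y₂⟩
    have hprod : ∀ a c : g, ∀ bb d : g, ⁅(a, bb), (c, d)⁆ = (⁅a, c⁆, ⁅bb, d⁆) :=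
      fun _ _ _ _ => rfl
    simp only [LinearMap.prod_apply, LinearMap.sub_apply, LinearMap.add_apply,
      LinearMap.comp_apply, LinearMap.fst_apply, LinearMap.snd_apply, Function.prod, hprod]
    have e1 : ⁅x₁, y₁⁆ = (b.repr x₁ 0 * b.repr y₁ 1 - b.repr x₁ 1 * b.repr y₁ 0) • b 2 := by
      conv_lhs => rw [hx x₁, hx y₁]
      exact hbr _ _ _ _ _ _
    have e2 : ⁅x₂, y₂⁆ = (b.repr x₂ 0 * b.repr y₂ 1 - b.repr x₂ 1 * b.repr y₂ 0) • b 2 := by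
      conv_lhs => rw [hx x₂, hx y₂]
      exact hbr _ _ _ _ _ _
    have e3 : ⁅A x₁ - B x₂, y₁⁆
        = ((-(b.repr x₁ 1)) * b.repr y₁ 1 - b.repr x₁ 0 * b.repr y₁ 0) • b 2 := by
      conv_lhs => rw [hAmB, hx y₁]
      exact hbr _ _ _ _ _ _
    have e4 : ⁅B x₁ + A x₂, y₂⁆
        = ((-(b.repr x₂ 1)) * b.repr y₂ 1 - b.repr x₂ 0 * b.repr y₂ 0) • b 2 := by
      conv_lhs => rw [hBpA, hx y₂]
      exact hbr _ _ _ _ _ _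
    have e5 : ⁅x₁, A y₁ - B y₂⁆
        = (b.repr x₁ 0 * b.repr y₁ 0 - b.repr x₁ 1 * (-(b.repr y₁ 1))) • b 2 := by
      conv_lhs => rw [hx x₁, hAmB]
      exact hbr _ _ _ _ _ _
    have e6 : ⁅x₂, B y₁ + A y₂⁆
        = (b.repr x₂ 0 * b.repr y₂ 0 - b.repr x₂ 1 * (-(b.repr y₂ 1))) • b 2 := by
      conv_lhs => rw [hx x₂, hBpA]
      exact hbr _ _ _ _ _ _
    have e7 : ⁅A x₁ - B x₂, A y₁ - B y₂⁆
        = ((-(b.repr x₁ 1)) * b.repr y₁ 0 - b.repr x₁ 0 * (-(b.repr y₁ 1))) • b 2 := by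
      conv_lhs => rw [hAmB, hAmB]
      exact hbr _ _ _ _ _ _
    have e8 : ⁅B x₁ + A x₂, B y₁ + A y₂⁆
        = ((-(b.repr x₂ 1)) * b.repr y₂ 0 - b.repr x₂ 0 * (-(b.repr y₂ 1))) • b 2 := by
      conv_lhs => rw [hBpA, hBpA]
      exact hbr _ _ _ _ _ _
    rw [e1, e2, e3, e4, e5, e6, e7, e8, hAs, hAs, hBs, hBs, hAs, hAs, hBs, hBs]
    refine Prod.ext ?_ ?_ <;>
      simp only [Prod.fst_add, Prod.fst_sub, Prod.snd_add, Prod.snd_sub, Prod.fst_zero,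
        Prod.snd_zero, Prod.mk_add_mk, Prod.mk_sub_mk] <;>
      module
end

section
/- Let g be the 3-dimensional real Lie algebra with basis e₁, e₂, e₃ and brackets [e₁,e₂] = e₁, [e₁,e₃] = 0, [e₂,e₃] = 0. Then g × g admits an integrable complex structure. -/
lemma prod_lie_def {L : Type*} [LieRing L] (x y : L × L) :
    ⁅x, y⁆ = (⁅x.1, y.1⁆, ⁅x.2, y.2⁆) := rfl

set_option maxHeartbeats 1000000 in
theorem bianchi2_product_admits {g : Type*} [LieRing g] [LieAlgebra ℝ g]
    (b : Module.Basis (Fin 3) ℝ g) 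
    (h12 : ⁅b 0, b 1⁆ = b 0) (h13 : ⁅b 0, b 2⁆ = 0) (h23 : ⁅b 1, b 2⁆ = 0) :
    ∃ 𝒥 : (g × g) →ₗ[ℝ] (g × g), (∀ x, 𝒥 (𝒥 x) = -x) ∧
      ∀ x y : g × g,
        ⁅x, y⁆ + 𝒥 ⁅𝒥 x, y⁆ + 𝒥 ⁅x, 𝒥 y⁆ - ⁅𝒥 x, 𝒥 y⁆ = 0 := by
  classical
  have h21 : ⁅b 1, b 0⁆ = -(b 0) := by rw [← lie_skew, h12]
  have h31 : ⁅b 2, b 0⁆ = 0 := by rw [← lie_skew, h13, neg_zero]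
  have h32 : ⁅b 2, b 1⁆ = 0 := by rw [← lie_skew, h23, neg_zero]
  set B : Module.Basis (Fin 3 ⊕ Fin 3) ℝ (g × g) := b.prod b with hB
  set v : Fin 3 ⊕ Fin 3 → g × g := fun i =>
    Sum.elim (fun i : Fin 3 => if i = 0 then (-(b 1), (0:g)) else if i = 1 then (b 0, 0) else (0, b 2))
      (fun i : Fin 3 => if i = 0 then ((0:g), -(b 1)) else if i = 1 then (0, b 0) else (-(b 2), 0)) i
    with hv
  set J : (g × g) →ₗ[ℝ] (g × g) := B.constr ℝ v with hJdef
  have hBl : ∀ i : Fin 3, B (Sum.inl i) = (b i, 0) := by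
    intro i; simp [hB, Module.Basis.prod_apply]
  have hBr : ∀ i : Fin 3, B (Sum.inr i) = (0, b i) := by
    intro i; simp [hB, Module.Basis.prod_apply]
  have hJ : ∀ i, J (B i) = v i := fun i => B.constr_basis ℝ v i
  have j0 : J (b 0, 0) = (-(b 1), 0) := by have := hJ (Sum.inl 0); rwa [hBl] at this
  have j1 : J (b 1, 0) = (b 0, 0) := by have := hJ (Sum.inl 1); rwa [hBl] at this
  have j2 : J (b 2, 0) = (0, b 2) := by have := hJ (Sum.inl 2); rwa [hBl] at this
  have j0' : J (0, b 0) = (0, -(b 1)) := by have := hJ (Sum.inr 0); rwa [hBr] at this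
  have j1' : J (0, b 1) = (0, b 0) := by have := hJ (Sum.inr 1); rwa [hBr] at this
  have j2' : J (0, b 2) = (-(b 2), 0) := by have := hJ (Sum.inr 2); rwa [hBr] at this
  have jz : J (0, 0) = (0, 0) := by
    have : ((0,0) : g × g) = 0 := rfl
    rw [this, map_zero]
  have jn0 : J (-(b 0), 0) = (b 1, 0) := by
    have h : ((-(b 0), (0:g)) : g × g) = -(b 0, 0) := by simp
    rw [h, map_neg, j0]; simp
  have jn1 : J (-(b 1), 0) = (-(b 0), 0) := by
    have h : ((-(b 1), (0:g)) : g × g) = -(b 1, 0) := by simp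
    rw [h, map_neg, j1]; simp
  have jn2 : J (-(b 2), 0) = (0, -(b 2)) := by
    have h : ((-(b 2), (0:g)) : g × g) = -(b 2, 0) := by simp
    rw [h, map_neg, j2]; simp
  have jn0' : J (0, -(b 0)) = (0, b 1) := by
    have h : (((0:g), -(b 0)) : g × g) = -(0, b 0) := by simp
    rw [h, map_neg, j0']; simp
  have jn1' : J (0, -(b 1)) = (0, -(b 0)) := by
    have h : (((0:g), -(b 1)) : g × g) = -(0, b 1) := by simp
    rw [h, map_neg, j1']; simp
  have jn2' : J (0, -(b 2)) = (b 2, 0) := by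
    have h : (((0:g), -(b 2)) : g × g) = -(0, b 2) := by simp
    rw [h, map_neg, j2']; simp
  refine ⟨J, ?_, ?_⟩
  · have hsq : J ∘ₗ J = -LinearMap.id := by
      apply B.ext
      rintro (i | i) <;> fin_cases i <;>
        simp [hBl, hBr, j0, j1, j2, j0', j1', j2', jn0, jn1, jn2, jn0', jn1', jn2']
    intro x
    have := LinearMap.congr_fun hsq x
    simpa using this
  · set N : (g × g) →ₗ[ℝ] (g × g) →ₗ[ℝ] (g × g) := LinearMap.mk₂ ℝ
      (fun x y => ⁅x, y⁆ + J ⁅J x, y⁆ + J ⁅x, J y⁆ - ⁅J x, J y⁆)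
      (by intro m m' y; simp only [add_lie, lie_add, map_add]; try abel)
      (by intro c m y; simp only [smul_lie, lie_smul, map_smul, smul_add, smul_sub]; try abel)
      (by intro m y y'; simp only [add_lie, lie_add, map_add]; try abel)
      (by intro c m y; simp only [smul_lie, lie_smul, map_smul, smul_add, smul_sub]; try abel)
      with hN
    have hN0 : N = 0 := by
      apply B.ext
      rintro (i | i) <;> fin_cases i <;>
      · apply B.ext
        rintro (j | j) <;> fin_cases j <;>
          simp [hN, LinearMap.mk₂_apply, hBl, hBr, prod_lie_def,
            h12, h13, h23, h21, h31, h32,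
            j0, j1, j2, j0', j1', j2', jz, jn0, jn1, jn2, jn0', jn1', jn2',
            Prod.mk_add_mk, Prod.ext_iff]
    intro x y
    have := LinearMap.congr_fun (LinearMap.congr_fun hN0 x) y
    simpa [hN] using this
end

section
/- Let g be the 3-dimensional real Lie algebra with basis e₁, e₂, e₃ and brackets [e₁,e₃] = e₁, [e₂,e₃] = e₂, [e₁,e₂] = 0 (Bianchi type with θ = 1). Then g × g admits an integrable complex structure. -/
theorem prod_lie_mk {L : Type*} [LieRing L] (a b c d : L) :
    ⁅((a, b) : L × L), ((c, d) : L × L)⁆ = (⁅a, c⁆, ⁅b, d⁆) := rfl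

theorem neg_pair_left {L : Type*} [LieRing L] (a : L) :
    ((-a, (0 : L)) : L × L) = -(a, (0 : L)) := by ext <;> simp

theorem neg_pair_right {L : Type*} [LieRing L] (a : L) :
    (((0 : L), -a) : L × L) = -((0 : L), a) := by ext <;> simp

theorem fin3_mk0 (h : (0:ℕ) < 3) : (⟨0, h⟩ : Fin 3) = 0 := rfl
theorem fin3_mk1 (h : (1:ℕ) < 3) : (⟨1, h⟩ : Fin 3) = 1 := rfl
theorem fin3_mk2 (h : (2:ℕ) < 3) : (⟨2, h⟩ : Fin 3) = 2 := rfl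

set_option maxHeartbeats 1000000 in
theorem bianchi4_theta_one_product_admits {g : Type*} [LieRing g] [LieAlgebra ℝ g]
    (b : Module.Basis (Fin 3) ℝ g) 
    (h13 : ⁅b 0, b 2⁆ = b 0) (h23 : ⁅b 1, b 2⁆ = b 1) (h12 : ⁅b 0, b 1⁆ = 0) :
    ∃ 𝒥 : (g × g) →ₗ[ℝ] (g × g), (∀ x, 𝒥 (𝒥 x) = -x) ∧
      ∀ x y : g × g,
        ⁅x, y⁆ + 𝒥 ⁅𝒥 x, y⁆ + 𝒥 ⁅x, 𝒥 y⁆ - ⁅𝒥 x, 𝒥 y⁆ = 0 := by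
  classical
  set B : Module.Basis (Fin 3 ⊕ Fin 3) ℝ (g × g) := b.prod b with hBdef
  set f : Fin 3 ⊕ Fin 3 → g × g := fun i =>
    match i with
    | Sum.inl 0 => B (Sum.inl 1)
    | Sum.inl 1 => -B (Sum.inl 0)
    | Sum.inl 2 => B (Sum.inr 2)
    | Sum.inr 0 => B (Sum.inr 1)
    | Sum.inr 1 => -B (Sum.inr 0)
    | Sum.inr 2 => -B (Sum.inl 2) with hfdef
  set J : (g × g) →ₗ[ℝ] (g × g) := B.constr ℝ f with hJdef
  have hJB : ∀ i, J (B i) = f i := fun i => B.constr_basis ℝ f i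
  have hBl : ∀ i : Fin 3, B (Sum.inl i) = (b i, 0) := by
    intro i; ext <;> simp [hBdef]
  have hBr : ∀ i : Fin 3, B (Sum.inr i) = (0, b i) := by
    intro i; ext <;> simp [hBdef]
  -- derived brackets in g
  have h21 : ⁅b 1, b 0⁆ = 0 := by rw [← lie_skew, h12, neg_zero]
  have h31 : ⁅b 2, b 0⁆ = -b 0 := by rw [← lie_skew, h13]
  have h32 : ⁅b 2, b 1⁆ = -b 1 := by rw [← lie_skew, h23]
  -- J values in pair form
  have hJ0 : J ((b 0 : g), (0 : g)) = ((b 1 : g), (0 : g)) := by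
    rw [← hBl, ← hBl]; exact hJB (Sum.inl 0)
  have hJ1 : J ((b 1 : g), (0 : g)) = -((b 0 : g), (0 : g)) := by
    rw [← hBl, ← hBl]; exact hJB (Sum.inl 1)
  have hJ2 : J ((b 2 : g), (0 : g)) = ((0 : g), (b 2 : g)) := by
    rw [← hBl, ← hBr]; exact hJB (Sum.inl 2)
  have hJ3 : J ((0 : g), (b 0 : g)) = ((0 : g), (b 1 : g)) := by
    rw [← hBr, ← hBr]; exact hJB (Sum.inr 0)
  have hJ4 : J ((0 : g), (b 1 : g)) = -((0 : g), (b 0 : g)) := by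
    rw [← hBr, ← hBr]; exact hJB (Sum.inr 1)
  have hJ5 : J ((0 : g), (b 2 : g)) = -((b 2 : g), (0 : g)) := by
    rw [← hBr, ← hBl]; exact hJB (Sum.inr 2)
  refine ⟨J, ?_, ?_⟩
  · -- J ∘ J = -id
    have hsq : J ∘ₗ J = -LinearMap.id := by
      refine B.ext fun i => ?_
      rcases i with (i | i) <;> fin_cases i <;>
        simp only [fin3_mk0, fin3_mk1, fin3_mk2, LinearMap.comp_apply, LinearMap.neg_apply, LinearMap.id_apply,
          hBl, hBr, hJ0, hJ1, hJ2, hJ3, hJ4, hJ5, map_neg, neg_neg]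
    intro x
    have := congrArg (fun m : (g × g) →ₗ[ℝ] (g × g) => m x) hsq
    simpa using this
  · -- Nijenhuis vanishes
    set N : (g × g) →ₗ[ℝ] (g × g) →ₗ[ℝ] (g × g) :=
      LinearMap.mk₂ ℝ (fun x y => ⁅x, y⁆ + J ⁅J x, y⁆ + J ⁅x, J y⁆ - ⁅J x, J y⁆)
        (by intro x x' y; simp only [add_lie, lie_add, map_add]; abel)
        (by intro t x y; simp only [smul_lie, lie_smul, map_smul, smul_add, smul_sub])
        (by intro x y y'; simp only [add_lie, lie_add, map_add]; abel)
        (by intro t x y; simp only [smul_lie, lie_smul, map_smul, smul_add, smul_sub])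
        with hNdef
    have hN : N = 0 := by
      refine B.ext fun i => B.ext fun j => ?_
      rcases i with (i | i) <;> fin_cases i <;> rcases j with (j | j) <;> fin_cases j <;>
        · simp only [fin3_mk0, fin3_mk1, fin3_mk2, hNdef, LinearMap.mk₂_apply, LinearMap.zero_apply, hBl, hBr,
            prod_lie_mk, h12, h13, h23, h21, h31, h32, lie_self, lie_zero, zero_lie,
            hJ0, hJ1, hJ2, hJ3, hJ4, hJ5, map_neg, map_zero, lie_neg, neg_lie,
            neg_pair_left, neg_pair_right, neg_neg, neg_zero, Prod.mk_zero_zero]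
          abel
    intro x y
    have := congrArg (fun m : (g × g) →ₗ[ℝ] (g × g) →ₗ[ℝ] (g × g) => m x y) hN
    simpa [hNdef, LinearMap.mk₂_apply] using this
end

section
/- Let g = sl(2,ℝ), realized as the 3-dimensional real Lie algebra with basis e₁, e₂, e₃ and brackets [e₁,e₃] = e₂, [e₂,e₃] = e₁, [e₁,e₂] = e₃. Then g × g admits an integrable complex structure. -/
theorem sl2_product_admits {g : Type*} [LieRing g] [LieAlgebra ℝ g]
    (b : Module.Basis (Fin 3) ℝ g) 
    (h13 : ⁅b 0, b 2⁆ = b 1) (h23 : ⁅b 1, b 2⁆ = b 0) (h12 : ⁅b 0, b 1⁆ = b 2) :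
    ∃ 𝒥 : (g × g) →ₗ[ℝ] (g × g), (∀ x, 𝒥 (𝒥 x) = -x) ∧
      ∀ x y : g × g,
        ⁅x, y⁆ + 𝒥 ⁅𝒥 x, y⁆ + 𝒥 ⁅x, 𝒥 y⁆ - ⁅𝒥 x, 𝒥 y⁆ = 0 := by
  classical
  have h31 : ⁅b 2, b 0⁆ = -(b 1) := by rw [← lie_skew, h13]
  have h32 : ⁅b 2, b 1⁆ = -(b 0) := by rw [← lie_skew, h23]
  have h21 : ⁅b 1, b 0⁆ = -(b 2) := by rw [← lie_skew, h12]
  have pbr : ∀ x y : g × g, ⁅x, y⁆ = (⁅x.1, y.1⁆, ⁅x.2, y.2⁆) := fun _ _ => rfl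
  let B : Module.Basis (Fin 3 ⊕ Fin 3) ℝ (g × g) := b.prod b
  let v : Fin 3 ⊕ Fin 3 → g × g :=
    Sum.elim ![(-(b 2), 0), (0, -(b 1)), ((b 0), 0)]
             ![(0, -(b 2)), ((b 1), 0), (0, (b 0))]
  let J : (g × g) →ₗ[ℝ] (g × g) := B.constr ℝ v
  have hBl : ∀ i, B (Sum.inl i) = (b i, 0) := fun i => by
    ext
    · exact b.prod_apply_inl_fst b i
    · exact b.prod_apply_inl_snd b i
  have hBr : ∀ i, B (Sum.inr i) = (0, b i) := fun i => by
    ext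
    · exact b.prod_apply_inr_fst b i
    · exact b.prod_apply_inr_snd b i
  have hJl : ∀ i, J (b i, 0) = v (Sum.inl i) := fun i => by
    rw [← hBl]; exact B.constr_basis ℝ v (Sum.inl i)
  have hJr : ∀ i, J (0, b i) = v (Sum.inr i) := fun i => by
    rw [← hBr]; exact B.constr_basis ℝ v (Sum.inr i)
  have hJ0 : J (b 0, 0) = (-(b 2), 0) := hJl 0
  have hJ1 : J (b 1, 0) = (0, -(b 1)) := hJl 1
  have hJ2 : J (b 2, 0) = ((b 0), 0) := hJl 2
  have hJ3 : J (0, b 0) = (0, -(b 2)) := hJr 0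
  have hJ4 : J (0, b 1) = ((b 1), 0) := hJr 1
  have hJ5 : J (0, b 2) = (0, (b 0)) := hJr 2
  have negl : ∀ a : g, ((-a, (0 : g)) : g × g) = -(a, (0 : g)) := by intro a; ext <;> simp
  have negr : ∀ a : g, (((0 : g), -a) : g × g) = -((0 : g), a) := by intro a; ext <;> simp
  have hJ0n : J (-(b 0), 0) = ((b 2), 0) := by rw [negl, map_neg, hJ0, ← negl, neg_neg]
  have hJ1n : J (-(b 1), 0) = (0, (b 1)) := by rw [negl, map_neg, hJ1, ← negr, neg_neg]
  have hJ2n : J (-(b 2), 0) = (-(b 0), 0) := by rw [negl, map_neg, hJ2, ← negl]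
  have hJ3n : J (0, -(b 0)) = (0, (b 2)) := by rw [negr, map_neg, hJ3, ← negr, neg_neg]
  have hJ4n : J (0, -(b 1)) = (-(b 1), 0) := by rw [negr, map_neg, hJ4, ← negl]
  have hJ5n : J (0, -(b 2)) = (0, -(b 0)) := by rw [negr, map_neg, hJ5, ← negr]
  have htwo : (⟨2, by omega⟩ : Fin 3) = 2 := rfl
  have hz : J ((0 : g), (0 : g)) = 0 := by
    have : ((0 : g), (0 : g)) = (0 : g × g) := rfl
    rw [this, map_zero]
  refine ⟨J, ?_, ?_⟩
  · -- J² = -id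
    have key : J.comp J = -LinearMap.id := by
      apply B.ext
      rintro (i | i) <;> fin_cases i <;>
        simp only [Fin.zero_eta, Fin.mk_one, htwo, LinearMap.comp_apply, LinearMap.neg_apply, LinearMap.id_apply, hBl, hBr,
          hJ0, hJ1, hJ2, hJ3, hJ4, hJ5, hJ0n, hJ1n, hJ2n, hJ3n, hJ4n, hJ5n] <;>
        (ext <;> simp)
    intro x
    have := LinearMap.congr_fun key x
    simpa using this
  · -- Nijenhuis
    let N : (g × g) →ₗ[ℝ] (g × g) →ₗ[ℝ] (g × g) := LinearMap.mk₂ ℝ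
      (fun x y => ⁅x, y⁆ + J ⁅J x, y⁆ + J ⁅x, J y⁆ - ⁅J x, J y⁆)
      (by intro x x' y; simp only [map_add, add_lie, lie_add]; abel)
      (by intro s x y; simp only [map_smul, smul_lie, lie_smul, smul_add, smul_sub])
      (by intro x y y'; simp only [map_add, add_lie, lie_add]; abel)
      (by intro s x y; simp only [map_smul, smul_lie, lie_smul, smul_add, smul_sub])
    have hNapp : ∀ x y, N x y = ⁅x, y⁆ + J ⁅J x, y⁆ + J ⁅x, J y⁆ - ⁅J x, J y⁆ :=
      fun x y => rfl
    have hN0 : N = 0 := by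
      apply B.ext
      rintro (i | i) <;> fin_cases i <;>
      · apply B.ext
        rintro (j | j) <;> fin_cases j <;>
        · rw [LinearMap.zero_apply]
          simp only [Fin.zero_eta, Fin.mk_one, htwo, hNapp, hBl, hBr, pbr, lie_self, zero_lie, lie_zero, neg_lie, lie_neg,
            h12, h13, h23, h21, h31, h32,
            hJ0, hJ1, hJ2, hJ3, hJ4, hJ5, hJ0n, hJ1n, hJ2n, hJ3n, hJ4n, hJ5n, hz, neg_neg]
          ext <;> simp [hz] <;> abel
    intro x y
    have := LinearMap.congr_fun (LinearMap.congr_fun hN0 x) y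
    rw [LinearMap.zero_apply, LinearMap.zero_apply, hNapp] at this
    exact this
end

section
/- Let g be the 3-dimensional real Lie algebra with basis e₁, e₂, e₃ and brackets [e₁,e₃] = e₁, [e₂,e₃] = θ·e₂, [e₁,e₂] = 0, where θ is a nonzero real number with θ ≠ 1. Then the 6-dimensional product Lie algebra g × g admits no integrable complex structure: there is no linear map 𝒥 : g × g → g × g with 𝒥² = -id whose Nijenhuis tensor vanishes identically. -/
open scoped BigOperators

abbrev ι6 := Fin 3 ⊕ Fin 3

/-- structure constants of g -/
def cg3 (θ : ℝ) : Fin 3 → Fin 3 → Fin 3 → ℝ := fun i j r =>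
  if i = 0 ∧ j = 2 ∧ r = 0 then 1
  else if i = 2 ∧ j = 0 ∧ r = 0 then -1
  else if i = 1 ∧ j = 2 ∧ r = 1 then θ
  else if i = 2 ∧ j = 1 ∧ r = 1 then -θ
  else 0

def cR6 (θ : ℝ) : ι6 → ι6 → ι6 → ℝ
  | .inl i, .inl j, .inl r => cg3 θ i j r
  | .inr i, .inr j, .inr r => cg3 θ i j r
  | _, _, _ => 0

def brR (θ : ℝ) (x y : ι6 → ℝ) : ι6 → ℝ :=
  fun j => ∑ k, ∑ l, cR6 θ k l j * x k * y l

noncomputable def brC (θ : ℝ) (x y : ι6 → ℂ) : ι6 → ℂ :=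
  fun j => ∑ k, ∑ l, (cR6 θ k l j : ℂ) * x k * y l

-- test: compute brC X v for v supported on n-part
example (θ : ℝ) (X v : ι6 → ℂ) (h5 : v (.inl 2) = 0) (h6 : v (.inr 2) = 0) :
    brC θ X v = fun j => -((Sum.elim ![X (.inl 2), θ * X (.inl 2), 0]
      ![X (.inr 2), θ * X (.inr 2), 0] j) * v j) := by
  funext j
  rcases j with j | j <;> fin_cases j <;>
    simp [brC, Fintype.sum_sum_type, Fin.sum_univ_three, cR6, cg3, h5, h6]

noncomputable def JcM (Jm : Matrix ι6 ι6 ℝ) : Matrix ι6 ι6 ℂ :=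
  Jm.map (fun r => (r : ℂ))

/-- membership in the i-eigenspace m -/
def inm (Jm : Matrix ι6 ι6 ℝ) (v : ι6 → ℂ) : Prop :=
  (JcM Jm).mulVec v = Complex.I • v

noncomputable def oC (x : ι6 → ℝ) : ι6 → ℂ := fun j => (x j : ℂ)

lemma mulVec_oC (Jm : Matrix ι6 ι6 ℝ) (x : ι6 → ℝ) :
    (JcM Jm).mulVec (oC x) = oC (Jm.mulVec x) := by
  funext i
  simp [JcM, oC, Matrix.mulVec, dotProduct]

lemma brC_oC (θ : ℝ) (x y : ι6 → ℝ) : brC θ (oC x) (oC y) = oC (brR θ x y) := by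
  funext j
  simp [brC, brR, oC]

lemma brC_add_left (θ : ℝ) (x x' y : ι6 → ℂ) :
    brC θ (x + x') y = brC θ x y + brC θ x' y := by
  funext j
  simp only [brC, Pi.add_apply]
  rw [← Finset.sum_add_distrib]
  congr 1; funext k
  rw [← Finset.sum_add_distrib]
  congr 1; funext l
  ring

lemma brC_add_right (θ : ℝ) (x y y' : ι6 → ℂ) :
    brC θ x (y + y') = brC θ x y + brC θ x y' := by
  funext j
  simp only [brC, Pi.add_apply]
  rw [← Finset.sum_add_distrib]
  congr 1; funext k
  rw [← Finset.sum_add_distrib]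
  congr 1; funext l
  ring

lemma brC_smul_left (θ : ℝ) (c : ℂ) (x y : ι6 → ℂ) :
    brC θ (c • x) y = c • brC θ x y := by
  funext j
  simp only [brC, Pi.smul_apply, smul_eq_mul, Finset.mul_sum]
  congr 1; funext k
  congr 1; funext l
  ring

lemma brC_smul_right (θ : ℝ) (c : ℂ) (x y : ι6 → ℂ) :
    brC θ x (c • y) = c • brC θ x y := by
  funext j
  simp only [brC, Pi.smul_apply, smul_eq_mul, Finset.mul_sum]
  congr 1; funext k
  congr 1; funext l
  ring

/-- complexified Nijenhuis expression -/
noncomputable def Nc (θ : ℝ) (Jm : Matrix ι6 ι6 ℝ) (v w : ι6 → ℂ) : ι6 → ℂ :=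
  brC θ v w + (JcM Jm).mulVec (brC θ ((JcM Jm).mulVec v) w)
    + (JcM Jm).mulVec (brC θ v ((JcM Jm).mulVec w))
    - brC θ ((JcM Jm).mulVec v) ((JcM Jm).mulVec w)

section CoordWorld

variable (θ : ℝ) (Jm : Matrix ι6 ι6 ℝ)

lemma JcM_mulVec_add (v w : ι6 → ℂ) :
    (JcM Jm).mulVec (v + w) = (JcM Jm).mulVec v + (JcM Jm).mulVec w :=
  Matrix.mulVec_add _ _ _

lemma JcM_mulVec_smul (c : ℂ) (v : ι6 → ℂ) :
    (JcM Jm).mulVec (c • v) = c • (JcM Jm).mulVec v := by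
  funext i
  simp [Matrix.mulVec, dotProduct, Finset.mul_sum, mul_left_comm, mul_add]

lemma Nc_add_left (v v' w : ι6 → ℂ) :
    Nc θ Jm (v + v') w = Nc θ Jm v w + Nc θ Jm v' w := by
  simp only [Nc, JcM_mulVec_add, brC_add_left]
  abel

lemma Nc_add_right (v w w' : ι6 → ℂ) :
    Nc θ Jm v (w + w') = Nc θ Jm v w + Nc θ Jm v w' := by
  simp only [Nc, JcM_mulVec_add, brC_add_right]
  abel

lemma Nc_smul_left (c : ℂ) (v w : ι6 → ℂ) :
    Nc θ Jm (c • v) w = c • Nc θ Jm v w := by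
  simp only [Nc, JcM_mulVec_smul, brC_smul_left, smul_add, smul_sub]

lemma Nc_smul_right (c : ℂ) (v w : ι6 → ℂ) :
    Nc θ Jm v (c • w) = c • Nc θ Jm v w := by
  simp only [Nc, JcM_mulVec_smul, brC_smul_right, smul_add, smul_sub]

lemma vec_decomp (v : ι6 → ℂ) :
    v = oC (fun j => (v j).re) + Complex.I • oC (fun j => (v j).im) := by
  funext j
  simp only [Pi.add_apply, Pi.smul_apply, oC, smul_eq_mul]
  rw [mul_comm]
  exact (Complex.re_add_im (v j)).symm

end CoordWorld

section Main

variable {θ : ℝ} {Jm : Matrix ι6 ι6 ℝ}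
variable (hJ2 : ∀ x : ι6 → ℝ, Jm.mulVec (Jm.mulVec x) = -x)
variable (hN : ∀ x y : ι6 → ℝ,
    brR θ x y + Jm.mulVec (brR θ (Jm.mulVec x) y) + Jm.mulVec (brR θ x (Jm.mulVec y))
      - brR θ (Jm.mulVec x) (Jm.mulVec y) = 0)

include hN in
lemma Nc_real (x y : ι6 → ℝ) : Nc θ Jm (oC x) (oC y) = 0 := by
  have h := hN x y
  have : oC (brR θ x y + Jm.mulVec (brR θ (Jm.mulVec x) y)
      + Jm.mulVec (brR θ x (Jm.mulVec y)) - brR θ (Jm.mulVec x) (Jm.mulVec y)) = 0 := by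
    rw [h]; funext j; simp [oC]
  rw [Nc]
  have hoadd : ∀ u v : ι6 → ℝ, oC (u + v) = oC u + oC v := by
    intro u v; funext j; simp [oC]
  have hosub : ∀ u v : ι6 → ℝ, oC (u - v) = oC u - oC v := by
    intro u v; funext j; simp [oC]
  rw [hosub, hoadd, hoadd] at this
  rw [mulVec_oC, brC_oC, mulVec_oC, brC_oC, brC_oC, mulVec_oC, mulVec_oC, brC_oC]
  exact this

include hN in
lemma Nc_zero (v w : ι6 → ℂ) : Nc θ Jm v w = 0 := by
  rw [vec_decomp v, vec_decomp w]
  simp only [Nc_add_left, Nc_add_right, Nc_smul_left, Nc_smul_right, Nc_real hN]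
  simp

include hJ2 in
lemma J2C (v : ι6 → ℂ) : (JcM Jm).mulVec ((JcM Jm).mulVec v) = -v := by
  rw [vec_decomp v]
  rw [JcM_mulVec_add, JcM_mulVec_smul, JcM_mulVec_add, JcM_mulVec_smul,
    mulVec_oC, mulVec_oC, mulVec_oC, mulVec_oC, hJ2, hJ2]
  funext j
  simp [oC]
  ring

include hN in
lemma inm_br {v w : ι6 → ℂ} (hv : inm Jm v) (hw : inm Jm w) : inm Jm (brC θ v w) := by
  have h := Nc_zero hN v w
  rw [Nc, hv, hw] at h
  simp only [brC_smul_left, brC_smul_right, JcM_mulVec_smul] at h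
  rw [inm]
  have h2 : (2 : ℂ) • brC θ v w + ((2:ℂ) * Complex.I) • (JcM Jm).mulVec (brC θ v w) = 0 := by
    rw [← h]
    funext j
    simp only [Pi.add_apply, Pi.sub_apply, Pi.smul_apply, smul_eq_mul]
    ring_nf
    simp [Complex.I_sq]
    ring
  have h3 := congrArg (fun z => ((2:ℂ)*Complex.I)⁻¹ • z) h2
  simp only [smul_add, smul_smul, smul_zero] at h3
  have hI : ((2:ℂ)*Complex.I)⁻¹ * ((2:ℂ)*Complex.I) = 1 := by
    rw [inv_mul_cancel₀]; simp [Complex.I_ne_zero]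
  rw [hI, one_smul] at h3
  have h4 : (JcM Jm).mulVec (brC θ v w)
      = -((((2:ℂ)*Complex.I)⁻¹ * 2) • brC θ v w) :=
    eq_neg_of_add_eq_zero_right h3
  show (JcM Jm).mulVec (brC θ v w) = Complex.I • brC θ v w
  rw [h4, ← neg_smul]
  congr 1
  rw [mul_inv, Complex.inv_I]
  ring

end Main

noncomputable def dvec (θ : ℝ) (a b : ℂ) : ι6 → ℂ :=
  Sum.elim ![a, (θ:ℂ)*a, 0] ![b, (θ:ℂ)*b, 0]

section Main2

variable {θ : ℝ} {Jm : Matrix ι6 ι6 ℝ}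
variable (hJ2 : ∀ x : ι6 → ℝ, Jm.mulVec (Jm.mulVec x) = -x)
variable (hN : ∀ x y : ι6 → ℝ,
    brR θ x y + Jm.mulVec (brR θ (Jm.mulVec x) y) + Jm.mulVec (brR θ x (Jm.mulVec y))
      - brR θ (Jm.mulVec x) (Jm.mulVec y) = 0)

lemma inm_add {v w : ι6 → ℂ} (hv : inm Jm v) (hw : inm Jm w) : inm Jm (v + w) := by
  rw [inm, JcM_mulVec_add, hv, hw, smul_add]

lemma inm_smul {v : ι6 → ℂ} (c : ℂ) (hv : inm Jm v) : inm Jm (c • v) := by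
  rw [inm, JcM_mulVec_smul, hv, smul_smul, smul_smul, mul_comm]

lemma brC_diag (X v : ι6 → ℂ) (h5 : v (.inl 2) = 0) (h6 : v (.inr 2) = 0) :
    brC θ X v = fun j => -(dvec θ (X (.inl 2)) (X (.inr 2)) j * v j) := by
  funext j
  rcases j with j | j <;> fin_cases j <;>
    simp [brC, dvec, Fintype.sum_sum_type, Fin.sum_univ_three, cR6, cg3, h5, h6] <;> ring

include hN in
lemma step_inm (X : ι6 → ℂ) (hX : inm Jm X) (μ : ℂ) (v : ι6 → ℂ)
    (hv : inm Jm v) (h5 : v (.inl 2) = 0) (h6 : v (.inr 2) = 0) :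
    inm Jm (fun j => (dvec θ (X (.inl 2)) (X (.inr 2)) j - μ) * v j)
    ∧ (dvec θ (X (.inl 2)) (X (.inr 2)) (.inl 2) - μ) * v (.inl 2) = 0
    ∧ (dvec θ (X (.inl 2)) (X (.inr 2)) (.inr 2) - μ) * v (.inr 2) = 0 := by
  refine ⟨?_, by rw [h5, mul_zero], by rw [h6, mul_zero]⟩
  have hbr := inm_br hN hX hv
  rw [brC_diag X v h5 h6] at hbr
  have heq : (fun j => (dvec θ (X (.inl 2)) (X (.inr 2)) j - μ) * v j)
      = ((-1 : ℂ) • (fun j => -(dvec θ (X (.inl 2)) (X (.inr 2)) j * v j))) + ((-μ) • v) := by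
    funext j; simp; ring
  rw [heq]
  exact inm_add (inm_smul _ hbr) (inm_smul _ hv)

include hN in
lemma key_case (X u : ι6 → ℂ) (hX : inm Jm X)
    (hu : inm Jm u) (hu5 : u (.inl 2) = 0) (hu6 : u (.inr 2) = 0)
    (i₀ : ι6) (hu0 : u i₀ ≠ 0) (μ1 μ2 μ3 : ℂ)
    (hμ : ∀ j : ι6, j ≠ i₀ → dvec θ (X (.inl 2)) (X (.inr 2)) j = μ1
        ∨ dvec θ (X (.inl 2)) (X (.inr 2)) j = μ2
        ∨ dvec θ (X (.inl 2)) (X (.inr 2)) j = μ3 ∨ u j = 0)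
    (h1 : dvec θ (X (.inl 2)) (X (.inr 2)) i₀ ≠ μ1)
    (h2 : dvec θ (X (.inl 2)) (X (.inr 2)) i₀ ≠ μ2)
    (h3 : dvec θ (X (.inl 2)) (X (.inr 2)) i₀ ≠ μ3) : False := by
  set D := dvec θ (X (.inl 2)) (X (.inr 2)) with hD
  obtain ⟨hw1, hw15, hw16⟩ := step_inm hN X hX μ1 u hu hu5 hu6
  obtain ⟨hw2, hw25, hw26⟩ := step_inm hN X hX μ2 _ hw1 hw15 hw16
  obtain ⟨hw3, hw35, hw36⟩ := step_inm hN X hX μ3 _ hw2 hw25 hw26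
  set w : ι6 → ℂ := fun j => (D j - μ3) * ((D j - μ2) * ((D j - μ1) * u j)) with hwdef
  have hwz : ∀ j : ι6, j ≠ i₀ → w j = 0 := by
    intro j hj
    rcases hμ j hj with h | h | h | h <;> rw [hwdef] <;> simp [h]
  have hwi : w i₀ ≠ 0 :=
    mul_ne_zero (sub_ne_zero.2 h3) (mul_ne_zero (sub_ne_zero.2 h2)
      (mul_ne_zero (sub_ne_zero.2 h1) hu0))
  have := congrFun hw3 i₀
  rw [Matrix.mulVec, dotProduct] at this
  have hsum : ∑ l, JcM Jm i₀ l * w l = JcM Jm i₀ i₀ * w i₀ :=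
    Finset.sum_eq_single_of_mem i₀ (Finset.mem_univ _)
      (fun l _ hl => by rw [hwz l hl, mul_zero])
  rw [hsum] at this
  have hJI : JcM Jm i₀ i₀ = Complex.I := mul_right_cancel₀ hwi (by
    simpa using this)
  have : (0 : ℝ) = 1 := by
    have := congrArg Complex.im hJI
    simpa [JcM] using this
  norm_num at this

end Main2

section Main3

variable {θ : ℝ} {Jm : Matrix ι6 ι6 ℝ}
variable (hN : ∀ x y : ι6 → ℝ,
    brR θ x y + Jm.mulVec (brR θ (Jm.mulVec x) y) + Jm.mulVec (brR θ x (Jm.mulVec y))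
      - brR θ (Jm.mulVec x) (Jm.mulVec y) = 0)

include hN in
lemma eigen (hθ0 : θ ≠ 0) (hθ1 : θ ≠ 1) (X u : ι6 → ℂ) (hX : inm Jm X)
    (hu : inm Jm u) (hu5 : u (.inl 2) = 0) (hu6 : u (.inr 2) = 0) (hune : u ≠ 0)
    (ha0 : X (.inl 2) ≠ 0) (hb0 : X (.inr 2) ≠ 0)
    (hab : X (.inl 2) ≠ X (.inr 2))
    (habθ : X (.inl 2) ≠ (θ:ℂ) * X (.inr 2))
    (hbaθ : X (.inr 2) ≠ (θ:ℂ) * X (.inl 2)) : False := by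
  set a := X (.inl 2) with hadef
  set b := X (.inr 2) with hbdef
  have hθ0c : (θ:ℂ) ≠ 0 := by exact_mod_cast hθ0
  have hθ1c : (θ:ℂ) ≠ 1 := by exact_mod_cast hθ1
  have haθ : a ≠ (θ:ℂ) * a := by
    intro h
    have : ((θ:ℂ) - 1) * a = 0 := by linear_combination -h
    rcases mul_eq_zero.1 this with h' | h'
    · exact hθ1c (by linear_combination h')
    · exact ha0 h'
  have hbθ : b ≠ (θ:ℂ) * b := by
    intro h
    have : ((θ:ℂ) - 1) * b = 0 := by linear_combination -h
    rcases mul_eq_zero.1 this with h' | h'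
    · exact hθ1c (by linear_combination h')
    · exact hb0 h'
  have hθab : (θ:ℂ) * a ≠ (θ:ℂ) * b := fun h => hab (mul_left_cancel₀ hθ0c h)
  obtain ⟨j₀, hj₀⟩ : ∃ j, u j ≠ 0 := by
    by_contra h
    push_neg at h
    exact hune (funext h)
  have hDl0 : dvec θ a b (.inl 0) = a := by simp [dvec]
  have hDl1 : dvec θ a b (.inl 1) = (θ:ℂ)*a := by simp [dvec]
  have hDl2 : dvec θ a b (.inl 2) = 0 := by simp [dvec]
  have hDr0 : dvec θ a b (.inr 0) = b := by simp [dvec]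
  have hDr1 : dvec θ a b (.inr 1) = (θ:ℂ)*b := by simp [dvec]
  have hDr2 : dvec θ a b (.inr 2) = 0 := by simp [dvec]
  rcases j₀ with j | j <;> fin_cases j
  · -- i₀ = inl 0
    refine key_case hN X u hX hu hu5 hu6 (.inl 0) hj₀ ((θ:ℂ)*a) b ((θ:ℂ)*b) ?_ ?_ ?_ ?_
    · intro j hj
      rcases j with j | j <;> fin_cases j <;>
        simp_all [hDl1, hDl2, hDr0, hDr1, hDr2]
    · rw [hDl0]; exact haθ
    · rw [hDl0]; exact hab
    · rw [hDl0]; exact habθ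
  · -- i₀ = inl 1
    refine key_case hN X u hX hu hu5 hu6 (.inl 1) hj₀ a b ((θ:ℂ)*b) ?_ ?_ ?_ ?_
    · intro j hj
      rcases j with j | j <;> fin_cases j <;>
        simp_all [hDl0, hDl2, hDr0, hDr1, hDr2]
    · rw [hDl1]; exact fun h => haθ h.symm
    · rw [hDl1]; exact fun h => hbaθ h.symm
    · rw [hDl1]; exact hθab
  · -- i₀ = inl 2 : contradiction with hu5
    exact hj₀ hu5
  · -- i₀ = inr 0
    refine key_case hN X u hX hu hu5 hu6 (.inr 0) hj₀ a ((θ:ℂ)*a) ((θ:ℂ)*b) ?_ ?_ ?_ ?_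
    · intro j hj
      rcases j with j | j <;> fin_cases j <;>
        simp_all [hDl0, hDl1, hDl2, hDr1, hDr2]
    · rw [hDr0]; exact fun h => hab h.symm
    · rw [hDr0]; exact hbaθ
    · rw [hDr0]; exact hbθ
  · -- i₀ = inr 1
    refine key_case hN X u hX hu hu5 hu6 (.inr 1) hj₀ a ((θ:ℂ)*a) b ?_ ?_ ?_ ?_
    · intro j hj
      rcases j with j | j <;> fin_cases j <;>
        simp_all [hDl0, hDl1, hDl2, hDr0, hDr2]
    · rw [hDr1]; exact fun h => habθ h.symm
    · rw [hDr1]; exact fun h => hθab h.symm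
    · rw [hDr1]; exact fun h => hbθ h.symm
  · -- i₀ = inr 2
    exact hj₀ hu6

end Main3

section Main4

variable {θ : ℝ} {Jm : Matrix ι6 ι6 ℝ}
variable (hJ2 : ∀ x : ι6 → ℝ, Jm.mulVec (Jm.mulVec x) = -x)

include hJ2 in
lemma inm_px (v : ι6 → ℂ) : inm Jm (v + (-Complex.I) • (JcM Jm).mulVec v) := by
  rw [inm, JcM_mulVec_add, JcM_mulVec_smul, J2C hJ2]
  funext j
  simp only [Pi.add_apply, Pi.smul_apply, Pi.neg_apply, smul_eq_mul, neg_mul]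
  ring_nf
  try simp [Complex.I_sq]
  try ring

noncomputable def cnjV (v : ι6 → ℂ) : ι6 → ℂ := fun j => (starRingEnd ℂ) (v j)

lemma mulVec_cnjV (Jm : Matrix ι6 ι6 ℝ) (v : ι6 → ℂ) :
    (JcM Jm).mulVec (cnjV v) = cnjV ((JcM Jm).mulVec v) := by
  funext i
  simp [cnjV, Matrix.mulVec, dotProduct, map_sum, JcM]

include hJ2 in
lemma inm_qx (v : ι6 → ℂ) : inm Jm (cnjV (v + Complex.I • (JcM Jm).mulVec v)) := by
  rw [inm, mulVec_cnjV, JcM_mulVec_add, JcM_mulVec_smul, J2C hJ2]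
  funext j
  simp only [cnjV, Pi.add_apply, Pi.smul_apply, Pi.neg_apply, smul_eq_mul, map_add, map_mul,
    Complex.conj_I]
  ring_nf
  try simp [Complex.I_sq]
  try ring

include hJ2 in
lemma exists_X (θ : ℝ) :
    ∃ X : ι6 → ℂ, inm Jm X ∧ X (.inl 2) ≠ 0 ∧ X (.inr 2) ≠ 0
      ∧ X (.inl 2) ≠ X (.inr 2)
      ∧ X (.inl 2) ≠ (θ:ℂ) * X (.inr 2)
      ∧ X (.inr 2) ≠ (θ:ℂ) * X (.inl 2) := by
  by_cases hex : ∃ X₁ X₂, inm Jm X₁ ∧ inm Jm X₂ ∧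
      X₁ (.inl 2) * X₂ (.inr 2) - X₁ (.inr 2) * X₂ (.inl 2) ≠ 0
  · obtain ⟨X₁, X₂, h1, h2, hΔ⟩ := hex
    set Δ := X₁ (.inl 2) * X₂ (.inr 2) - X₁ (.inr 2) * X₂ (.inl 2) with hΔdef
    set s := (X₂ (.inr 2) - Complex.I * X₂ (.inl 2)) / Δ with hs
    set t := (Complex.I * X₁ (.inl 2) - X₁ (.inr 2)) / Δ with ht
    refine ⟨s • X₁ + t • X₂, inm_add (inm_smul s h1) (inm_smul t h2), ?_⟩
    have ha : (s • X₁ + t • X₂) (.inl 2) = 1 := by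
      simp only [Pi.add_apply, Pi.smul_apply, smul_eq_mul, hs, ht]
      field_simp
      ring
    have hb : (s • X₁ + t • X₂) (.inr 2) = Complex.I := by
      simp only [Pi.add_apply, Pi.smul_apply, smul_eq_mul, hs, ht]
      field_simp
      ring
    rw [ha, hb]
    refine ⟨one_ne_zero, Complex.I_ne_zero, ?_, ?_, ?_⟩
    · simp [Complex.ext_iff]
    · simp [Complex.ext_iff]
    · simp [Complex.ext_iff]
  · push_neg at hex
    have hline0 : ∀ X₁ X₂, inm Jm X₁ → inm Jm X₂ →
        X₁ (.inl 2) * X₂ (.inr 2) = X₁ (.inr 2) * X₂ (.inl 2) := by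
      intro X₁ X₂ h1 h2
      have := hex X₁ X₂ h1 h2
      rwa [sub_eq_zero] at this
    have hex2 : ∃ X, inm Jm X ∧ (X (.inl 2) ≠ 0 ∨ X (.inr 2) ≠ 0) := by
      by_contra hno
      push_neg at hno
      set δ : ι6 → ℂ := fun j => if j = Sum.inl 2 then 1 else 0 with hδ
      have hp := inm_px hJ2 δ
      have h5 := (hno _ hp).1
      have hJδ : (JcM Jm).mulVec δ (.inl 2) = ((Jm (.inl 2) (.inl 2) : ℝ) : ℂ) := by
        rw [Matrix.mulVec, dotProduct]
        rw [Finset.sum_eq_single_of_mem (Sum.inl 2) (Finset.mem_univ _)]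
        · simp [hδ, JcM]
        · intro l _ hl; simp [hδ, hl]
      rw [Pi.add_apply, Pi.smul_apply, hJδ] at h5
      have := congrArg Complex.re h5
      simp [hδ] at this
    obtain ⟨X₀, hX₀, hab0⟩ := hex2
    set a := X₀ (.inl 2) with hadef
    set b := X₀ (.inr 2) with hbdef
    have hline : ∀ X, inm Jm X → X (.inl 2) * b = X (.inr 2) * a :=
      fun X hX => hline0 X X₀ hX hX₀
    have hnc : ∀ c : ℂ, ¬((starRingEnd ℂ) a = c * a ∧ (starRingEnd ℂ) b = c * b) := by
      rintro c ⟨hca, hcb⟩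
      have hc0 : c ≠ 0 := by
        rintro rfl
        simp only [zero_mul] at hca hcb
        rcases hab0 with h | h
        · exact h (by rw [← Complex.conj_conj a, hca, map_zero])
        · exact h (by rw [← Complex.conj_conj b, hcb, map_zero])
      have key : ∀ δ : ι6 → ℂ, (2:ℂ) * δ (.inl 2) * b = (2:ℂ) * δ (.inr 2) * a := by
        intro δ
        set p : ι6 → ℂ := δ + (-Complex.I) • (JcM Jm).mulVec δ with hp
        set q : ι6 → ℂ := δ + Complex.I • (JcM Jm).mulVec δ with hq
        have hlp := hline p (inm_px hJ2 δ)
        have hlq' := hline (cnjV q) (inm_qx hJ2 δ)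
        have hlq : q (.inl 2) * (starRingEnd ℂ) b = q (.inr 2) * (starRingEnd ℂ) a := by
          have := congrArg (starRingEnd ℂ) hlq'
          simpa [cnjV, map_mul] using this
        rw [hca, hcb] at hlq
        have hlq2 : q (.inl 2) * b = q (.inr 2) * a := by
          have : c * (q (.inl 2) * b) = c * (q (.inr 2) * a) := by linear_combination hlq
          exact mul_left_cancel₀ hc0 this
        have hpq : p (.inl 2) + q (.inl 2) = 2 * δ (.inl 2) := by
          simp only [hp, hq, Pi.add_apply, Pi.smul_apply, smul_eq_mul, Pi.neg_apply]
          ring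
        have hpq2 : p (.inr 2) + q (.inr 2) = 2 * δ (.inr 2) := by
          simp only [hp, hq, Pi.add_apply, Pi.smul_apply, smul_eq_mul, Pi.neg_apply]
          ring
        calc (2:ℂ) * δ (.inl 2) * b = (p (.inl 2) + q (.inl 2)) * b := by rw [hpq]
          _ = p (.inr 2) * a + q (.inr 2) * a := by rw [add_mul, hlp, hlq2]
          _ = (2:ℂ) * δ (.inr 2) * a := by rw [← add_mul, hpq2]
      have hkey5 := key (fun j => if j = Sum.inl 2 then 1 else 0)
      have hkey6 := key (fun j => if j = Sum.inr 2 then 1 else 0)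
      simp at hkey5 hkey6
      rcases hab0 with h | h
      · exact h hkey6
      · exact h hkey5
    have ha0 : a ≠ 0 := by
      intro h
      have hbne : b ≠ 0 := by
        rcases hab0 with h' | h'
        · exact absurd h h'
        · exact h'
      refine hnc ((starRingEnd ℂ) b / b) ⟨?_, ?_⟩
      · rw [h, mul_zero, map_zero]
      · rw [div_mul_cancel₀ _ hbne]
    have hb0 : b ≠ 0 := by
      intro h
      refine hnc ((starRingEnd ℂ) a / a) ⟨?_, ?_⟩
      · rw [div_mul_cancel₀ _ ha0]
      · rw [h, mul_zero, map_zero]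
    refine ⟨X₀, hX₀, ha0, hb0, ?_, ?_, ?_⟩
    · intro h
      rw [← hadef, ← hbdef] at h
      refine hnc ((starRingEnd ℂ) a / a) ⟨by rw [div_mul_cancel₀ _ ha0], ?_⟩
      rw [← h, div_mul_cancel₀ _ ha0]
    · intro h
      rw [← hadef, ← hbdef] at h
      refine hnc ((starRingEnd ℂ) b / b) ⟨?_, by rw [div_mul_cancel₀ _ hb0]⟩
      rw [h, map_mul, Complex.conj_ofReal]
      field_simp [hb0]
    · intro h
      rw [← hadef, ← hbdef] at h
      refine hnc ((starRingEnd ℂ) a / a) ⟨by rw [div_mul_cancel₀ _ ha0], ?_⟩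
      rw [h, map_mul, Complex.conj_ofReal]
      field_simp [ha0]

end Main4

section Main5

variable {θ : ℝ} {Jm : Matrix ι6 ι6 ℝ}
variable (hJ2 : ∀ x : ι6 → ℝ, Jm.mulVec (Jm.mulVec x) = -x)

lemma exists_r (Jm : Matrix ι6 ι6 ℝ) : ∃ r : ι6 → ℝ, r ≠ 0 ∧ r (.inl 2) = 0 ∧ r (.inr 2) = 0
    ∧ Jm.mulVec r (.inl 2) = 0 ∧ Jm.mulVec r (.inr 2) = 0 := by
  set M : (ι6 → ℝ) →ₗ[ℝ] (Fin 4 → ℝ) :=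
    { toFun := fun r => ![r (.inl 2), r (.inr 2), Jm.mulVec r (.inl 2), Jm.mulVec r (.inr 2)]
      map_add' := by
        intro r s
        funext i
        fin_cases i <;> simp [Matrix.mulVec_add]
      map_smul' := by
        intro c r
        funext i
        fin_cases i <;> simp [Matrix.mulVec_smul] } with hM
  have hnotinj : ¬ Function.Injective M := by
    intro hinj
    have := LinearMap.finrank_le_finrank_of_injective hinj
    simp [Module.finrank_pi] at this
  rw [Function.not_injective_iff] at hnotinj
  obtain ⟨r1, r2, hr12, hne⟩ := hnotinj
  have hz : M (r1 - r2) = 0 := by rw [map_sub, hr12, sub_self]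
  have h0 := congrFun hz
  refine ⟨r1 - r2, sub_ne_zero.2 hne, ?_, ?_, ?_, ?_⟩
  · simpa [hM] using h0 0
  · simpa [hM] using h0 1
  · simpa [hM] using h0 2
  · simpa [hM] using h0 3

include hJ2 in
lemma exists_u : ∃ u : ι6 → ℂ, inm Jm u ∧ u (.inl 2) = 0 ∧ u (.inr 2) = 0 ∧ u ≠ 0 := by
  obtain ⟨r, hrne, hr5, hr6, hJr5, hJr6⟩ := exists_r Jm
  refine ⟨oC r + (-Complex.I) • (JcM Jm).mulVec (oC r), inm_px hJ2 (oC r), ?_, ?_, ?_⟩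
  · rw [Pi.add_apply, Pi.smul_apply, mulVec_oC]
    simp [oC, hr5, hJr5]
  · rw [Pi.add_apply, Pi.smul_apply, mulVec_oC]
    simp [oC, hr6, hJr6]
  · intro h
    apply hrne
    funext j
    have := congrFun h j
    rw [Pi.add_apply, Pi.smul_apply, mulVec_oC] at this
    have hre := congrArg Complex.re this
    simpa [oC] using hre

include hJ2 in
lemma coord_false (hN : ∀ x y : ι6 → ℝ,
    brR θ x y + Jm.mulVec (brR θ (Jm.mulVec x) y) + Jm.mulVec (brR θ x (Jm.mulVec y))
      - brR θ (Jm.mulVec x) (Jm.mulVec y) = 0)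
    (hθ0 : θ ≠ 0) (hθ1 : θ ≠ 1) : False := by
  obtain ⟨u, hu, hu5, hu6, hune⟩ := exists_u hJ2
  obtain ⟨X, hX, ha0, hb0, hab, habθ, hbaθ⟩ := exists_X hJ2 θ
  exact eigen hN hθ0 hθ1 X u hX hu hu5 hu6 hune ha0 hb0 hab habθ hbaθ

end Main5

section Transfer

variable {g : Type*} [LieRing g] [LieAlgebra ℝ g]
variable (b : Module.Basis (Fin 3) ℝ g) (θ : ℝ)
variable (h13 : ⁅b 0, b 2⁆ = b 0) (h23 : ⁅b 1, b 2⁆ = θ • b 1) (h12 : ⁅b 0, b 1⁆ = 0)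

include h13 h23 h12 in
lemma gbr : ∀ i i' : Fin 3, ⁅b i, b i'⁆ = ∑ r, cg3 θ i i' r • b r := by
  have h21 : ⁅b 1, b 0⁆ = 0 := by rw [← lie_skew, h12, neg_zero]
  have h31 : ⁅b 2, b 0⁆ = -b 0 := by rw [← lie_skew, h13]
  have h32 : ⁅b 2, b 1⁆ = -(θ • b 1) := by rw [← lie_skew, h23]
  intro i i'
  fin_cases i <;> fin_cases i' <;>
    simp [cg3, Fin.sum_univ_three, h12, h13, h23, h21, h31, h32]

include h13 h23 h12 in
lemma reprBr : ∀ k l j : ι6, (b.prod b).repr ⁅(b.prod b) k, (b.prod b) l⁆ j = cR6 θ k l j := by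
  have hrepr3 : ∀ i i' r : Fin 3, b.repr ⁅b i, b i'⁆ r = cg3 θ i i' r := by
    intro i i' r
    rw [gbr b θ h13 h23 h12]
    simp [Finsupp.single_apply, Finset.sum_ite_eq']
  have hBfst : ∀ i : Fin 3, ((b.prod b) (Sum.inl i)).1 = b i := fun i => b.prod_apply_inl_fst b i
  intro k l j
  have hbr : ∀ v w : g × g, ⁅v, w⁆ = (⁅v.1, w.1⁆, ⁅v.2, w.2⁆) := fun v w => rfl
  rcases k with i | i <;> rcases l with i' | i' <;> rcases j with r | r <;>
    rw [hbr] <;>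
    simp [Module.Basis.prod_repr_inl, Module.Basis.prod_repr_inr, Module.Basis.prod_apply_inl_fst,
      Module.Basis.prod_apply_inl_snd, Module.Basis.prod_apply_inr_fst, Module.Basis.prod_apply_inr_snd,
      hrepr3, cR6]

include h13 h23 h12 in
lemma repr_bracket : ∀ v w : g × g, ∀ j : ι6,
    (b.prod b).repr ⁅v, w⁆ j = brR θ ((b.prod b).repr v) ((b.prod b).repr w) j := by
  intro v w j
  have hsum_lie : ∀ (f : ι6 → g × g) (w : g × g),
      ⁅∑ k, f k, w⁆ = ∑ k, ⁅f k, w⁆ := by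
    intro f w
    induction (Finset.univ : Finset ι6) using Finset.induction with
    | empty => simp
    | insert _ _ h ih => rw [Finset.sum_insert h, add_lie, ih, Finset.sum_insert h]
  have hlie_sum : ∀ (v : g × g) (f : ι6 → g × g),
      ⁅v, ∑ k, f k⁆ = ∑ k, ⁅v, f k⁆ := by
    intro v f
    induction (Finset.univ : Finset ι6) using Finset.induction with
    | empty => simp
    | insert _ _ h ih => rw [Finset.sum_insert h, lie_add, ih, Finset.sum_insert h]
  conv_lhs => rw [← (b.prod b).sum_repr v, ← (b.prod b).sum_repr w]
  simp only [hsum_lie, hlie_sum, smul_lie, lie_smul, map_sum, map_smul,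
    Finsupp.coe_finset_sum, Finset.sum_apply, Finsupp.smul_apply, smul_eq_mul,
    reprBr b θ h13 h23 h12]
  rw [brR]
  exact Finset.sum_congr rfl fun k _ => Finset.sum_congr rfl fun l _ => by ring

end Transfer

theorem bianchi4_theta_ne_one_no_complex_structure {g : Type*} [LieRing g] [LieAlgebra ℝ g]
    (b : Module.Basis (Fin 3) ℝ g) (θ : ℝ) (hθ0 : θ ≠ 0) (hθ1 : θ ≠ 1)
    (h13 : ⁅b 0, b 2⁆ = b 0) (h23 : ⁅b 1, b 2⁆ = θ • b 1) (h12 : ⁅b 0, b 1⁆ = 0) :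
    ¬ ∃ 𝒥 : (g × g) →ₗ[ℝ] (g × g), (∀ x, 𝒥 (𝒥 x) = -x) ∧
      ∀ x y : g × g,
        ⁅x, y⁆ + 𝒥 ⁅𝒥 x, y⁆ + 𝒥 ⁅x, 𝒥 y⁆ - ⁅𝒥 x, 𝒥 y⁆ = 0 := by
  rintro ⟨J, hJsq, hNij⟩
  set B : Module.Basis ι6 ℝ (g × g) := b.prod b with hB
  set Jm : Matrix ι6 ι6 ℝ := LinearMap.toMatrix B B J with hJm
  have hA : ∀ z : g × g, (⇑(B.repr (J z)) : ι6 → ℝ) = Jm.mulVec (B.repr z) :=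
    fun z => (LinearMap.toMatrix_mulVec_repr B B J z).symm
  have hBr : ∀ v w : g × g, (⇑(B.repr ⁅v, w⁆) : ι6 → ℝ) = brR θ (B.repr v) (B.repr w) :=
    fun v w => funext fun j => repr_bracket b θ h13 h23 h12 v w j
  have hsur : ∀ x : ι6 → ℝ, ∃ v : g × g, (⇑(B.repr v) : ι6 → ℝ) = x := by
    intro x
    refine ⟨B.equivFun.symm x, ?_⟩
    funext j
    rw [← B.equivFun_apply, B.equivFun.apply_symm_apply]
  have hJ2 : ∀ x : ι6 → ℝ, Jm.mulVec (Jm.mulVec x) = -x := by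
    intro x
    obtain ⟨v, hv⟩ := hsur x
    rw [← hv, ← hA, ← hA, hJsq, map_neg]
    funext j
    simp
  have hN : ∀ x y : ι6 → ℝ,
      brR θ x y + Jm.mulVec (brR θ (Jm.mulVec x) y) + Jm.mulVec (brR θ x (Jm.mulVec y))
        - brR θ (Jm.mulVec x) (Jm.mulVec y) = 0 := by
    intro x y
    obtain ⟨v, hv⟩ := hsur x
    obtain ⟨w, hw⟩ := hsur y
    have h := hNij v w
    have h2 := congrArg (fun z : g × g => (⇑(B.repr z) : ι6 → ℝ)) h
    simp only [map_add, map_sub, Finsupp.coe_add, Finsupp.coe_sub, map_zero,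
      Finsupp.coe_zero] at h2
    simp only [hBr, hA, hv, hw] at h2
    exact h2
  exact coord_false hJ2 hN hθ0 hθ1
end

section
/- Let g be the 3-dimensional real Lie algebra with basis e₁, e₂, e₃ and brackets [e₁,e₃] = e₁, [e₂,e₃] = e₁ + e₂, [e₁,e₂] = 0. Then the product Lie algebra g × g admits no integrable complex structure. -/
private lemma scalar_contra (m00 m01 m02 m10 m11 m12 m20 m21 m22 : ℝ)
    (e1 : -(m20 * m20) = 0)
    (e2 : -(m00 * m20) - m10 * m21 + m11 * m20 = 0)
    (e3 : 1 + m00 * m00 + m00 * m10 + m01 * m10 + m02 * m20 - m10 * m22 + m12 * m20 = 0)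
    (e4 : m00 * m10 + m10 * m10 + m10 * m11 + m12 * m20 = 0)
    (e5 : 1 + m01 * m10 + m10 * m11 + m10 * m22 + m11 * m11 + m12 * m21 = 0)
    (e6 : 1 + m00 * m01 + m00 * m11 + m00 * m22 + m01 * m11 + m02 * m21 - m11 * m22
        + m12 * m21 = 0) :
    False := by
  have h20 : m20 = 0 := by
    have h : m20 * m20 = 0 := by linarith
    exact mul_self_eq_zero.mp h
  subst h20
  by_cases h10 : m10 = 0
  · subst h10
    nlinarith [sq_nonneg m00]
  · have h21 : m21 = 0 := by
      have hp : m10 * m21 = 0 := by linear_combination -e2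
      exact (mul_eq_zero.mp hp).resolve_left h10
    subst h21
    have h11 : m11 = -m00 - m10 := by
      have hp : m10 * (m00 + m10 + m11) = 0 := by linear_combination e4
      have h := (mul_eq_zero.mp hp).resolve_left h10
      linarith
    subst h11
    have h22 : m22 = 0 := by
      have hp : m10 * m22 = 0 := by linear_combination (e5 - e3) / 2
      exact (mul_eq_zero.mp hp).resolve_left h10
    subst h22
    have : (2 : ℝ) = 0 := by linear_combination e3 + e6
    norm_num at this

theorem bianchi5_no_complex_structure {g : Type*} [LieRing g] [LieAlgebra ℝ g]
    (b : Module.Basis (Fin 3) ℝ g) 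
    (h13 : ⁅b 0, b 2⁆ = b 0) (h23 : ⁅b 1, b 2⁆ = b 0 + b 1) (h12 : ⁅b 0, b 1⁆ = 0) :
    ¬ ∃ 𝒥 : (g × g) →ₗ[ℝ] (g × g), (∀ x, 𝒥 (𝒥 x) = -x) ∧
      ∀ x y : g × g,
        ⁅x, y⁆ + 𝒥 ⁅𝒥 x, y⁆ + 𝒥 ⁅x, 𝒥 y⁆ - ⁅𝒥 x, 𝒥 y⁆ = 0 := by
  rintro ⟨J, -, hN⟩
  classical
  -- remaining basis brackets
  have h10g : ⁅b 1, b 0⁆ = 0 := by rw [← lie_skew, h12, neg_zero]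
  have h20g : ⁅b 2, b 0⁆ = -b 0 := by rw [← lie_skew, h13]
  have h21g : ⁅b 2, b 1⁆ = -(b 0 + b 1) := by rw [← lie_skew, h23]
  -- expansion of the bracket in coordinates
  have key : ∀ v w : g, ⁅v, w⁆ =
      (b.repr v 0 * b.repr w 2 - b.repr v 2 * b.repr w 0 + b.repr v 1 * b.repr w 2
        - b.repr v 2 * b.repr w 1) • b 0
      + (b.repr v 1 * b.repr w 2 - b.repr v 2 * b.repr w 1) • b 1 := by
    intro v w
    conv_lhs => rw [← b.sum_repr v, ← b.sum_repr w]
    rw [Fin.sum_univ_three, Fin.sum_univ_three]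
    simp only [add_lie, lie_add, smul_lie, lie_smul, lie_self, h12, h13, h23, h10g, h20g, h21g,
      smul_zero, zero_add, add_zero, smul_neg, smul_add]
    module
  -- coordinates of basis vectors
  have r00 : b.repr (b 0) 0 = 1 := by simp
  have r01 : b.repr (b 0) 1 = 0 := by simp
  have r02 : b.repr (b 0) 2 = 0 := by simp
  have r10 : b.repr (b 1) 0 = 0 := by simp
  have r11 : b.repr (b 1) 1 = 1 := by simp
  have r12 : b.repr (b 1) 2 = 0 := by simp
  have r20 : b.repr (b 2) 0 = 0 := by simp
  have r21 : b.repr (b 2) 1 = 0 := by simp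
  have r22 : b.repr (b 2) 2 = 1 := by simp
  -- coordinates of a bracket
  have rep0 : ∀ v w : g, b.repr ⁅v, w⁆ 0 =
      b.repr v 0 * b.repr w 2 - b.repr v 2 * b.repr w 0 + b.repr v 1 * b.repr w 2
        - b.repr v 2 * b.repr w 1 := by
    intro v w
    rw [key v w]
    simp
  have rep1 : ∀ v w : g, b.repr ⁅v, w⁆ 1 =
      b.repr v 1 * b.repr w 2 - b.repr v 2 * b.repr w 1 := by
    intro v w
    rw [key v w]
    simp
  have rep2 : ∀ v w : g, b.repr ⁅v, w⁆ 2 = 0 := by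
    intro v w
    rw [key v w]
    simp
  -- the first components of J on the basis of the first factor
  set u : Fin 3 → g := fun i => (J ((b i, 0) : g × g)).1 with hu
  -- product bracket is componentwise
  have pb : ∀ x y : g × g, ⁅x, y⁆ = (⁅x.1, y.1⁆, ⁅x.2, y.2⁆) := fun _ _ => rfl
  -- expansion of (w, 0) in terms of the (b i, 0)
  have expand : ∀ w : g, ((w, (0 : g)) : g × g) =
      b.repr w 0 • ((b 0, 0) : g × g) + b.repr w 1 • ((b 1, 0) : g × g)
        + b.repr w 2 • ((b 2, 0) : g × g) := by
    intro w
    have h1 := b.sum_repr w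
    rw [Fin.sum_univ_three] at h1
    rw [Prod.ext_iff]
    constructor
    · simp only [Prod.fst_add, Prod.smul_fst]
      exact h1.symm
    · simp
  have L3 : ∀ (k : Fin 3) (w : g), b.repr ((J ((w, 0) : g × g)).1) k =
      b.repr w 0 * b.repr (u 0) k + b.repr w 1 * b.repr (u 1) k
        + b.repr w 2 * b.repr (u 2) k := by
    intro k w
    rw [expand w]
    simp only [map_add, map_smul, Prod.fst_add, Prod.smul_fst, Finsupp.coe_add,
      Finsupp.coe_smul, Pi.add_apply, Pi.smul_apply, smul_eq_mul, hu]
  -- the master scalar equation coming from the Nijenhuis condition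
  have master : ∀ i j k : Fin 3,
      b.repr ⁅b i, b j⁆ k
      + (b.repr ⁅u i, b j⁆ 0 * b.repr (u 0) k + b.repr ⁅u i, b j⁆ 1 * b.repr (u 1) k
          + b.repr ⁅u i, b j⁆ 2 * b.repr (u 2) k)
      + (b.repr ⁅b i, u j⁆ 0 * b.repr (u 0) k + b.repr ⁅b i, u j⁆ 1 * b.repr (u 1) k
          + b.repr ⁅b i, u j⁆ 2 * b.repr (u 2) k)
      - b.repr ⁅u i, u j⁆ k = 0 := by
    intro i j k
    have h := hN ((b i, 0) : g × g) ((b j, 0) : g × g)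
    have h1 : ⁅J ((b i, 0) : g × g), ((b j, 0) : g × g)⁆
        = ((⁅u i, b j⁆, 0) : g × g) := by
      rw [pb]; simp [hu]
    have h2 : ⁅((b i, 0) : g × g), J ((b j, 0) : g × g)⁆
        = ((⁅b i, u j⁆, 0) : g × g) := by
      rw [pb]; simp [hu]
    have h3 : ⁅((b i, 0) : g × g), ((b j, 0) : g × g)⁆
        = ((⁅b i, b j⁆, 0) : g × g) := by
      rw [pb]; simp
    have h4 : (⁅J ((b i, 0) : g × g), J ((b j, 0) : g × g)⁆).1 = ⁅u i, u j⁆ := by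
      rw [pb]
    have h' := congrArg (fun z : g × g => b.repr z.1 k) h
    simp only [h1, h2, h3, Prod.fst_add, Prod.fst_sub, map_add, map_sub,
      Finsupp.coe_add, Finsupp.coe_sub, Pi.add_apply, Pi.sub_apply, Prod.fst_zero,
      map_zero, Finsupp.coe_zero, Pi.zero_apply] at h'
    rw [h4, L3 k ⁅u i, b j⁆, L3 k ⁅b i, u j⁆] at h'
    linear_combination h'
  -- the six scalar equations
  have t1 := master 0 1 2
  have t2 := master 0 1 0
  have t3 := master 0 2 0
  have t4 := master 0 2 1
  have t5 := master 1 2 1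
  have t6 := master 1 2 0
  simp only [rep0, rep1, rep2, h12, h13, h23, map_add, Finsupp.coe_add, Pi.add_apply,
    r00, r01, r02, r10, r11, r12, r20, r21, r22, map_zero, Finsupp.coe_zero,
    Pi.zero_apply] at t1 t2 t3 t4 t5 t6
  exact scalar_contra (b.repr (u 0) 0) (b.repr (u 1) 0) (b.repr (u 2) 0)
    (b.repr (u 0) 1) (b.repr (u 1) 1) (b.repr (u 2) 1)
    (b.repr (u 0) 2) (b.repr (u 1) 2) (b.repr (u 2) 2)
    (by linear_combination t1) (by linear_combination t2) (by linear_combination t3)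
    (by linear_combination t4) (by linear_combination t5) (by linear_combination t6)
end

section
/- Let g be the 3-dimensional real Lie algebra with brackets [e₁,e₃] = e₁, [e₂,e₃] = θ·e₂, [e₁,e₂] = 0 (θ ≠ 0, θ ≠ 1), and suppose 𝒥 is an integrable complex structure on g × g. If u ∈ g × {0} is a nonzero vector with 𝒥u = λ·u + u* where u* ∈ {0} × g (i.e. u is quasi-invariant), then u does not lie in the derived subalgebra span{(e₁,0),(e₂,0)}; equivalently, the e₃-coordinate of u is nonzero. -/
set_option linter.unusedSectionVars false

namespace QIG
section aux
variable {g : Type*} [LieRing g] [LieAlgebra ℝ g]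

lemma prod_brkt (x y : g × g) : ⁅x, y⁆ = (⁅x.1, y.1⁆, ⁅x.2, y.2⁆) := rfl

variable (b : Module.Basis (Fin 3) ℝ g) (θ : ℝ)
    (h13 : ⁅b 0, b 2⁆ = b 0) (h23 : ⁅b 1, b 2⁆ = θ • b 1) (h12 : ⁅b 0, b 1⁆ = 0)

include b θ h13 h23 h12

lemma Dcoord (x : g) : ⁅x, b 2⁆ = (b.repr x 0) • b 0 + (θ * b.repr x 1) • b 1 := by
  conv_lhs => rw [← b.sum_repr x]
  simp [Fin.sum_univ_three, add_lie, smul_lie, h13, h23, smul_smul, mul_comm, -Module.Basis.sum_repr]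

lemma brkt (x y : g) : ⁅x, y⁆ = (b.repr y 2) • ⁅x, b 2⁆ - (b.repr x 2) • ⁅y, b 2⁆ := by
  have h10 : ⁅b 1, b 0⁆ = 0 := by rw [← lie_skew, h12, neg_zero]
  have h20 : ⁅b 2, b 0⁆ = -b 0 := by rw [← lie_skew, h13]
  have h21 : ⁅b 2, b 1⁆ = -(θ • b 1) := by rw [← lie_skew, h23]
  have c0 : ∀ z : g, ⁅z, b 0⁆ = -(b.repr z 2) • b 0 := by
    intro z
    conv_lhs => rw [← b.sum_repr z]
    simp [Fin.sum_univ_three, add_lie, smul_lie, h10, h20, -Module.Basis.sum_repr]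
  have c1 : ∀ z : g, ⁅z, b 1⁆ = -(θ * b.repr z 2) • b 1 := by
    intro z
    conv_lhs => rw [← b.sum_repr z]
    simp [Fin.sum_univ_three, add_lie, smul_lie, h12, h21, smul_smul, -Module.Basis.sum_repr]
    module
  conv_lhs => rw [← b.sum_repr y]
  simp only [Fin.sum_univ_three, lie_add, lie_smul, c0, c1]
  rw [Dcoord b θ h13 h23 h12 x, Dcoord b θ h13 h23 h12 y]
  module

lemma reprD0 (x : g) : b.repr ⁅x, b 2⁆ 0 = b.repr x 0 := by
  rw [Dcoord b θ h13 h23 h12 x]; simp [Finsupp.single_apply]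

lemma reprD1 (x : g) : b.repr ⁅x, b 2⁆ 1 = θ * b.repr x 1 := by
  rw [Dcoord b θ h13 h23 h12 x]; simp [Finsupp.single_apply]

lemma reprD2 (x : g) : b.repr ⁅x, b 2⁆ 2 = 0 := by
  rw [Dcoord b θ h13 h23 h12 x]; simp [Finsupp.single_apply]

lemma reprBr2 (x y : g) : b.repr ⁅x, y⁆ 2 = 0 := by
  rw [brkt b θ h13 h23 h12 x y]
  simp [reprD2 b θ h13 h23 h12]

omit θ h13 h23 h12 in
lemma eqz (x : g) (H0 : b.repr x 0 = 0) (H1 : b.repr x 1 = 0) (H2 : b.repr x 2 = 0) :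
    x = 0 := by
  have : ∀ i, b.repr x i = b.repr (0:g) i := by
    intro i; fin_cases i <;> simp [H0, H1, H2]
  exact b.ext_elem this

-- Lemma 1, first factor
lemma lem1 (𝒥 : (g × g) →ₗ[ℝ] (g × g))
    (hint : ∀ x y : g × g, ⁅x, y⁆ + 𝒥 ⁅𝒥 x, y⁆ + 𝒥 ⁅x, 𝒥 y⁆ - ⁅𝒥 x, 𝒥 y⁆ = 0)
    (w ws : g) (lam : ℝ) (hw2 : b.repr w 2 = 0)
    (hJw : 𝒥 (w, 0) = (lam • w, ws)) :
    (1 - lam * b.repr (𝒥 (b 2, 0)).1 2) • ((⁅w, b 2⁆ : g), (0:g))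
      + (lam + b.repr (𝒥 (b 2, 0)).1 2) • 𝒥 (⁅w, b 2⁆, 0)
      = ((0:g), ⁅ws, (𝒥 (b 2, 0)).2⁆) := by
  set p : g := (𝒥 (b 2, 0)).1 with hp
  set q : g := (𝒥 (b 2, 0)).2 with hq
  set p3 : ℝ := b.repr p 2 with hp3
  have hJe : 𝒥 ((b 2 : g), (0:g)) = (p, q) := by rw [hp, hq]
  have Jsm : ∀ (t : ℝ) (z : g), 𝒥 (t • z, 0) = t • 𝒥 (z, 0) := by
    intro t z
    rw [← map_smul]; congr 1; ext <;> simp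
  have hwp : ⁅w, p⁆ = p3 • ⁅w, b 2⁆ := by
    rw [brkt b θ h13 h23 h12 w p, hw2]; simp [hp3]
  have h := hint (w, 0) ((b 2 : g), (0:g))
  rw [hJw, hJe] at h
  simp only [prod_brkt] at h
  simp only [zero_lie, lie_zero, smul_lie, hwp] at h
  rw [show ((lam • ⁅w, b 2⁆, (0:g)) : g × g) = lam • ((⁅w, b 2⁆ : g), (0:g)) from by
        ext <;> simp,
      show ((p3 • ⁅w, b 2⁆, (0:g)) : g × g) = p3 • ((⁅w, b 2⁆ : g), (0:g)) from by
        ext <;> simp,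
      show ((lam • p3 • ⁅w, b 2⁆, ⁅ws, q⁆) : g × g)
          = (lam * p3) • ((⁅w, b 2⁆ : g), (0:g)) + ((0:g), ⁅ws, q⁆) from by
        ext <;> simp [mul_smul]] at h
  rw [map_smul, map_smul] at h
  linear_combination (norm := module) h

-- Lemma 1, second factor (mirror)
lemma lem1' (𝒥 : (g × g) →ₗ[ℝ] (g × g))
    (hint : ∀ x y : g × g, ⁅x, y⁆ + 𝒥 ⁅𝒥 x, y⁆ + 𝒥 ⁅x, 𝒥 y⁆ - ⁅𝒥 x, 𝒥 y⁆ = 0)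
    (w wp : g) (lam : ℝ) (hw2 : b.repr w 2 = 0)
    (hJw : 𝒥 (0, w) = (wp, lam • w)) :
    (1 - lam * b.repr (𝒥 (0, b 2)).2 2) • ((0:g), (⁅w, b 2⁆ : g))
      + (lam + b.repr (𝒥 (0, b 2)).2 2) • 𝒥 (0, ⁅w, b 2⁆)
      = (⁅wp, (𝒥 (0, b 2)).1⁆, (0:g)) := by
  set r : g := (𝒥 (0, b 2)).1 with hr
  set s : g := (𝒥 (0, b 2)).2 with hs
  set s3 : ℝ := b.repr s 2 with hs3
  have hJe : 𝒥 ((0:g), (b 2 : g)) = (r, s) := by rw [hr, hs]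
  have Jsm : ∀ (t : ℝ) (z : g), 𝒥 (0, t • z) = t • 𝒥 (0, z) := by
    intro t z
    rw [← map_smul]; congr 1; ext <;> simp
  have hws : ⁅w, s⁆ = s3 • ⁅w, b 2⁆ := by
    rw [brkt b θ h13 h23 h12 w s, hw2]; simp [hs3]
  have h := hint ((0:g), w) ((0:g), (b 2 : g))
  rw [hJw, hJe] at h
  simp only [prod_brkt] at h
  simp only [zero_lie, lie_zero, smul_lie, hws] at h
  rw [show (((0:g), lam • ⁅w, b 2⁆) : g × g) = lam • ((0:g), (⁅w, b 2⁆ : g)) from by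
        ext <;> simp,
      show (((0:g), s3 • ⁅w, b 2⁆) : g × g) = s3 • ((0:g), (⁅w, b 2⁆ : g)) from by
        ext <;> simp,
      show ((⁅wp, r⁆, lam • s3 • ⁅w, b 2⁆) : g × g)
          = (lam * s3) • ((0:g), (⁅w, b 2⁆ : g)) + (⁅wp, r⁆, (0:g)) from by
        ext <;> simp [mul_smul]] at h
  rw [map_smul, map_smul] at h
  linear_combination (norm := module) h

end aux
end QIG

set_option maxHeartbeats 1600000 in
theorem quasi_invariant_is_generic {g : Type*} [LieRing g] [LieAlgebra ℝ g]
    (b : Module.Basis (Fin 3) ℝ g) (θ : ℝ) (hθ0 : θ ≠ 0) (hθ1 : θ ≠ 1)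
    (h13 : ⁅b 0, b 2⁆ = b 0) (h23 : ⁅b 1, b 2⁆ = θ • b 1) (h12 : ⁅b 0, b 1⁆ = 0)
    (𝒥 : (g × g) →ₗ[ℝ] (g × g)) (h𝒥 : ∀ x, 𝒥 (𝒥 x) = -x)
    (hint : ∀ x y : g × g,
      ⁅x, y⁆ + 𝒥 ⁅𝒥 x, y⁆ + 𝒥 ⁅x, 𝒥 y⁆ - ⁅𝒥 x, 𝒥 y⁆ = 0)
    (u : g) (hu : u ≠ 0) (l : ℝ) (ustar : g)
    (hquasi : 𝒥 (u, 0) = (l • u, ustar)) :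
    b.repr u 2 ≠ 0 := by
  intro hc
  have BR := QIG.brkt b θ h13 h23 h12
  have R0 := QIG.reprD0 b θ h13 h23 h12
  have R1 := QIG.reprD1 b θ h13 h23 h12
  have R2 := QIG.reprD2 b θ h13 h23 h12
  have B2 := QIG.reprBr2 b θ h13 h23 h12
  have EZ := QIG.eqz b
  have L1 := QIG.lem1 b θ h13 h23 h12 𝒥 hint
  have L1' := QIG.lem1' b θ h13 h23 h12 𝒥 hint
  obtain ⟨p, hpdef⟩ : ∃ z, (𝒥 (b 2, 0)).1 = z := ⟨_, rfl⟩
  obtain ⟨q, hqdef⟩ : ∃ z, (𝒥 (b 2, 0)).2 = z := ⟨_, rfl⟩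
  rw [hpdef, hqdef] at L1
  obtain ⟨p3, hp3def⟩ : ∃ x, b.repr p 2 = x := ⟨_, rfl⟩
  rw [hp3def] at L1
  obtain ⟨s, hsdef⟩ : ∃ z, (𝒥 (0, b 2)).2 = z := ⟨_, rfl⟩
  rw [hsdef] at L1'
  obtain ⟨s3, hs3def⟩ : ∃ x, b.repr s 2 = x := ⟨_, rfl⟩
  rw [hs3def] at L1'
  obtain ⟨q3, hq3def⟩ : ∃ x, b.repr q 2 = x := ⟨_, rfl⟩
  obtain ⟨a, hadef⟩ : ∃ x, b.repr u 0 = x := ⟨_, rfl⟩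
  obtain ⟨c, hcdef⟩ : ∃ x, b.repr u 1 = x := ⟨_, rfl⟩
  -- linearity helpers
  have JL1 : ∀ (k : ℝ) (v : g), 𝒥 (k • v, 0) = k • 𝒥 (v, 0) := by
    intro k v
    rw [show ((k • v, (0:g)) : g × g) = k • (v, 0) from by ext <;> simp, map_smul]
  have JR1 : ∀ (k : ℝ) (v : g), 𝒥 (0, k • v) = k • 𝒥 (0, v) := by
    intro k v
    rw [show (((0:g), k • v) : g × g) = k • (0, v) from by ext <;> simp, map_smul]
  have JL2 : ∀ (k t : ℝ) (v w : g), 𝒥 (k • v - t • w, 0) = k • 𝒥 (v, 0) - t • 𝒥 (w, 0) := by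
    intro k t v w
    rw [show ((k • v - t • w, (0:g)) : g × g) = k • (v, 0) - t • (w, 0) from by ext <;> simp,
      map_sub, map_smul, map_smul]
  have JRadd : ∀ (k t : ℝ) (v w : g), 𝒥 (0, k • v + t • w) = k • 𝒥 (0, v) + t • 𝒥 (0, w) := by
    intro k t v w
    rw [show (((0:g), k • v + t • w) : g × g) = k • (0, v) + t • (0, w) from by ext <;> simp,
      map_add, map_smul, map_smul]
  -- elimination of the eigenvector case
  have eig : ∀ (w ws : g) (lam k : ℝ), w ≠ 0 → b.repr w 2 = 0 →
      ⁅w, b 2⁆ = k • w → k ≠ 0 → 𝒥 (w, 0) = (lam • w, ws) → False := by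
    intro w ws lam k hw hw2 heig hk hJw
    have h := L1 w ws lam hw2 hJw
    rw [heig, JL1, hJw] at h
    have h1 := congrArg Prod.fst h
    simp only [Prod.fst_add, Prod.smul_fst] at h1
    have key : (k * (1 + lam^2)) • w = 0 := by
      linear_combination (norm := module) h1
    rcases smul_eq_zero.mp key with h'|h'
    · rcases mul_eq_zero.mp h' with h''|h''
      · exact hk h''
      · linarith [sq_nonneg lam]
    · exact hw h'
  -- both coordinates of u are nonzero
  have ha0 : a ≠ 0 := by
    intro h0
    refine eig u ustar l θ hu hc ?_ hθ0 hquasi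
    refine sub_eq_zero.mp (EZ _ ?_ ?_ ?_) <;>
      simp only [map_sub, map_smul, Finsupp.coe_sub, Finsupp.sub_apply, Finsupp.coe_add, Finsupp.add_apply, Finsupp.coe_smul, Finsupp.smul_apply, Finsupp.coe_zero, Finsupp.zero_apply, smul_eq_mul, R0, R1, R2, hc, hadef, hcdef, h0] <;> ring
  have hc0 : c ≠ 0 := by
    intro h0
    refine eig u ustar l 1 hu hc ?_ one_ne_zero hquasi
    refine sub_eq_zero.mp (EZ _ ?_ ?_ ?_) <;>
      simp only [map_sub, map_smul, Finsupp.coe_sub, Finsupp.sub_apply, Finsupp.coe_add, Finsupp.add_apply, Finsupp.coe_smul, Finsupp.smul_apply, Finsupp.coe_zero, Finsupp.zero_apply, smul_eq_mul, R0, R1, R2, hc, hadef, hcdef, h0] <;> ring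
  -- step 1 : apply lem1 to u
  have h1 := L1 u ustar l hc hquasi
  have hDu0 : (⁅u, b 2⁆ : g) ≠ 0 := by
    intro h0
    apply ha0
    have := congrArg (fun z => b.repr z 0) h0
    rw [show (0:ℝ) = b.repr (0:g) 0 from by simp, ← h0, R0, hadef]
  have h1f := congrArg Prod.fst h1
  have h1s := congrArg Prod.snd h1
  simp only [Prod.fst_add, Prod.smul_fst] at h1f
  simp only [Prod.snd_add, Prod.smul_snd, smul_zero, zero_add] at h1s
  -- case l + p3 = 0 is impossible
  have hlp : l + p3 ≠ 0 := by
    intro h0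
    have hp3l : p3 = -l := by linarith
    rw [h0, zero_smul, add_zero, hp3l] at h1f
    have key : (1 + l^2) • (⁅u, b 2⁆ : g) = 0 := by
      linear_combination (norm := module) h1f
    rcases smul_eq_zero.mp key with h'|h'
    · linarith [sq_nonneg l]
    · exact hDu0 h'
  -- define lam1 and identify J on (Du, 0)
  obtain ⟨lam1, hlam1def⟩ : ∃ x, x = (l * p3 - 1) / (l + p3) := ⟨_, rfl⟩
  have E1 : (l + p3) * lam1 = l * p3 - 1 := by
    rw [hlam1def]; field_simp
  obtain ⟨x1s, hx1sdef⟩ : ∃ z, (𝒥 (⁅u, b 2⁆, 0)).2 = z := ⟨_, rfl⟩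
  have hx2 : (𝒥 (⁅u, b 2⁆, 0)).1 = lam1 • ⁅u, b 2⁆ := by
    have hx1 : (l + p3) • (𝒥 (⁅u, b 2⁆, 0)).1 = (l * p3 - 1) • (⁅u, b 2⁆ : g) := by
      linear_combination (norm := module) h1f
    have h3 := congrArg (fun z => (l + p3)⁻¹ • z) hx1
    simp only [smul_smul] at h3
    rw [inv_mul_cancel₀ hlp, one_smul] at h3
    rw [h3, hlam1def, div_eq_inv_mul]
  have hJDu : 𝒥 (⁅u, b 2⁆, 0) = (lam1 • ⁅u, b 2⁆, x1s) := by
    rw [← hx1sdef, ← hx2]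
  rw [hx1sdef] at h1s
  have S1 : (l + p3) • x1s = ⁅ustar, q⁆ := h1s
  -- step 2 : apply lem1 to Du
  have h2 := L1 ⁅u, b 2⁆ x1s lam1 (R2 u) hJDu
  have hDDu : (⁅⁅u, b 2⁆, b 2⁆ : g) = (1+θ) • ⁅u, b 2⁆ - θ • u := by
    refine sub_eq_zero.mp (EZ _ ?_ ?_ ?_) <;>
      simp only [map_sub, map_smul, Finsupp.coe_sub, Finsupp.sub_apply, Finsupp.coe_add, Finsupp.add_apply, Finsupp.coe_smul, Finsupp.smul_apply, Finsupp.coe_zero, Finsupp.zero_apply, smul_eq_mul, R0, R1, R2, hc, hadef, hcdef] <;> ring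
  rw [hDDu, JL2, hJDu, hquasi] at h2
  have h2f := congrArg Prod.fst h2
  have h2s := congrArg Prod.snd h2
  simp only [Prod.fst_add, Prod.smul_fst, Prod.fst_sub] at h2f
  simp only [Prod.snd_add, Prod.smul_snd, Prod.snd_sub, smul_zero, zero_add] at h2s
  have F0 : (1 - lam1*p3) * ((1+θ)*a - θ*a) + (lam1+p3) * ((1+θ)*(lam1*a) - θ*(l*a)) = 0 := by
    have t := congrArg (fun z => b.repr z 0) h2f
    simp only [map_add, map_sub, map_smul, map_zero, Finsupp.coe_sub, Finsupp.sub_apply, Finsupp.coe_add, Finsupp.add_apply, Finsupp.coe_smul, Finsupp.smul_apply, Finsupp.coe_zero, Finsupp.zero_apply, smul_eq_mul, R0, hadef] at t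
    linear_combination t
  have F1 : (1 - lam1*p3) * ((1+θ)*(θ*c) - θ*c)
      + (lam1+p3) * ((1+θ)*(lam1*(θ*c)) - θ*(l*c)) = 0 := by
    have t := congrArg (fun z => b.repr z 1) h2f
    simp only [map_add, map_sub, map_smul, map_zero, Finsupp.coe_sub, Finsupp.sub_apply, Finsupp.coe_add, Finsupp.add_apply, Finsupp.coe_smul, Finsupp.smul_apply, Finsupp.coe_zero, Finsupp.zero_apply, smul_eq_mul, R1, hcdef] at t
    linear_combination t
  have S2 : ⁅x1s, q⁆ = (lam1 + p3) • ((1+θ) • x1s - θ • ustar) := by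
    linear_combination (norm := module) -h2s
  -- scalar stage : θ = -1, p3 = 0, l * lam1 = -1
  have P1 : (1 - lam1*p3) + (lam1+p3) * ((1+θ)*lam1 - θ*l) = 0 := by
    apply mul_left_cancel₀ ha0
    linear_combination F0
  have P2 : (1 - lam1*p3)*(θ*θ) + (lam1+p3) * ((1+θ)*lam1*θ - θ*l) = 0 := by
    apply mul_left_cancel₀ hc0
    linear_combination F1
  have E2b : (1 - lam1*p3) + l*lam1 + l*p3 = 0 := by
    apply mul_left_cancel₀ (mul_ne_zero hθ0 (sub_ne_zero.mpr (Ne.symm hθ1)))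
    linear_combination θ*P1 - P2
  have hll : l * lam1 = -1 := by linear_combination E1/2 + E2b/2
  have hlne : lam1 ≠ l := by
    intro h
    rw [h] at hll
    linarith [mul_self_nonneg l]
  have hp30 : p3 = 0 := by
    have h2p : p3 * (lam1 - l) = 0 := by linear_combination E1/2 - E2b/2
    rcases mul_eq_zero.mp h2p with h'|h'
    · exact h'
    · exact absurd (by linarith : lam1 = l) hlne
  have hth : θ = -1 := by
    have key : (1+θ) * (lam1 * (lam1 - l)) = 0 := by
      linear_combination P1 - E2b - ((1+θ)*(lam1-l))*hp30
    have hlam10 : lam1 ≠ 0 := by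
      intro h; rw [h] at hll; simp at hll
    rcases mul_eq_zero.mp key with h'|h'
    · linarith
    · rcases mul_eq_zero.mp h' with h''|h''
      · exact absurd h'' hlam10
      · exact absurd (by linarith : lam1 = l) hlne
  subst hth
  have hl0 : l ≠ 0 := by intro h; rw [h] at hll; simp at hll
  have hlam10 : lam1 ≠ 0 := by intro h; rw [h] at hll; simp at hll
  have S1' : l • x1s = ⁅ustar, q⁆ := by
    rw [← S1, hp30, add_zero]
  have S2' : ⁅x1s, q⁆ = lam1 • ustar := by
    rw [S2, hp30]
    module
  -- nonvanishing
  have hxs0 : ustar ≠ 0 := by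
    intro h0
    rw [h0] at hquasi
    have t := h𝒥 (u, 0)
    rw [hquasi, show ((l • u, (0:g)) : g × g) = l • (u, 0) from by ext <;> simp,
      map_smul, hquasi] at t
    have t1 := congrArg Prod.fst t
    simp only [Prod.smul_fst, Prod.fst_neg] at t1
    have key : (l*l + 1) • u = 0 := by linear_combination (norm := module) t1
    rcases smul_eq_zero.mp key with h'|h'
    · linarith [mul_self_nonneg l]
    · exact hu h'
  have hx1s0 : x1s ≠ 0 := by
    intro h0
    rw [h0] at hJDu
    have t := h𝒥 (⁅u, b 2⁆, 0)
    rw [hJDu, show ((lam1 • ⁅u, b 2⁆, (0:g)) : g × g) = lam1 • (⁅u, b 2⁆, 0) from by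
        ext <;> simp, map_smul, hJDu] at t
    have t1 := congrArg Prod.fst t
    simp only [Prod.smul_fst, Prod.fst_neg] at t1
    have key : (lam1*lam1 + 1) • (⁅u, b 2⁆ : g) = 0 := by
      linear_combination (norm := module) t1
    rcases smul_eq_zero.mp key with h'|h'
    · linarith [mul_self_nonneg lam1]
    · exact hDu0 h'
  -- membership in g'
  have hxs2 : b.repr ustar 2 = 0 := by
    have t := congrArg (fun z => b.repr z 2) S2'
    simp only [B2, map_smul, Finsupp.coe_sub, Finsupp.sub_apply, Finsupp.coe_add, Finsupp.add_apply, Finsupp.coe_smul, Finsupp.smul_apply, Finsupp.coe_zero, Finsupp.zero_apply, smul_eq_mul] at t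
    rcases mul_eq_zero.mp t.symm with h'|h'
    · exact absurd h' hlam10
    · exact h'
  have hx1s2 : b.repr x1s 2 = 0 := by
    have t := congrArg (fun z => b.repr z 2) S1'
    simp only [B2, map_smul, Finsupp.coe_sub, Finsupp.sub_apply, Finsupp.coe_add, Finsupp.add_apply, Finsupp.coe_smul, Finsupp.smul_apply, Finsupp.coe_zero, Finsupp.zero_apply, smul_eq_mul] at t
    rcases mul_eq_zero.mp t with h'|h'
    · exact absurd h' hl0
    · exact h'
  -- J on (0, ustar) and (0, x1s)
  have hsplit1 : ((l • u, ustar) : g × g) = l • (u, 0) + ((0:g), ustar) := by ext <;> simp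
  have hJ0xs : 𝒥 (0, ustar) = ((-(1 + l^2)) • u, (-l) • ustar) := by
    have t := h𝒥 (u, 0)
    rw [hquasi, hsplit1, map_add, map_smul, hquasi, hsplit1] at t
    rw [show (((-(1 + l^2)) • u, (-l) • ustar) : g × g)
        = (-(1 + l^2)) • (u, 0) + (-l) • ((0:g), ustar) from by ext <;> simp]
    linear_combination (norm := module) t
  have hsplit2 : ((lam1 • ⁅u, b 2⁆, x1s) : g × g) = lam1 • (⁅u, b 2⁆, 0) + ((0:g), x1s) := by
    ext <;> simp
  have hJ0x1s : 𝒥 (0, x1s) = ((-(1 + lam1^2)) • ⁅u, b 2⁆, (-lam1) • x1s) := by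
    have t := h𝒥 (⁅u, b 2⁆, 0)
    rw [hJDu, hsplit2, map_add, map_smul, hJDu, hsplit2] at t
    rw [show (((-(1 + lam1^2)) • ⁅u, b 2⁆, (-lam1) • x1s) : g × g)
        = (-(1 + lam1^2)) • (⁅u, b 2⁆, 0) + (-lam1) • ((0:g), x1s) from by ext <;> simp]
    linear_combination (norm := module) t
  -- the mirror chain
  have mirror : ∀ (w wp : g) (lam : ℝ), w ≠ 0 → b.repr w 2 = 0 →
      𝒥 (0, w) = (wp, lam • w) →
      ∃ nu : ℝ, lam * nu = -1 ∧ (𝒥 (0, ⁅w, b 2⁆)).2 = nu • ⁅w, b 2⁆ := by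
    intro w wp lam hw hw2 hJw
    have hDw0 : (⁅w, b 2⁆ : g) ≠ 0 := by
      intro h0
      apply hw
      refine EZ _ ?_ ?_ hw2
      · have := congrArg (fun z => b.repr z 0) h0
        simpa [R0] using this
      · have := congrArg (fun z => b.repr z 1) h0
        simp only [R1, map_zero, Finsupp.coe_zero, Finsupp.zero_apply] at this
        linarith
    have m1 := L1' w wp lam hw2 hJw
    have m1s := congrArg Prod.snd m1
    simp only [Prod.snd_add, Prod.smul_snd] at m1s
    have hls : lam + s3 ≠ 0 := by
      intro h0
      have hs3l : s3 = -lam := by linarith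
      rw [h0, zero_smul, add_zero, hs3l] at m1s
      have key : (1 + lam^2) • (⁅w, b 2⁆ : g) = 0 := by
        linear_combination (norm := module) m1s
      rcases smul_eq_zero.mp key with h'|h'
      · nlinarith [sq_nonneg lam]
      · exact hDw0 h'
    obtain ⟨nu, hnudef⟩ : ∃ x, x = (lam * s3 - 1) / (lam + s3) := ⟨_, rfl⟩
    have E1m : (lam + s3) * nu = lam * s3 - 1 := by
      rw [hnudef]; field_simp
    have hx2m : (𝒥 (0, ⁅w, b 2⁆)).2 = nu • ⁅w, b 2⁆ := by
      have hx1m : (lam + s3) • (𝒥 (0, ⁅w, b 2⁆)).2 = (lam * s3 - 1) • (⁅w, b 2⁆ : g) := by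
        linear_combination (norm := module) m1s
      have h3 := congrArg (fun z => (lam + s3)⁻¹ • z) hx1m
      simp only [smul_smul] at h3
      rw [inv_mul_cancel₀ hls, one_smul] at h3
      rw [h3, hnudef, div_eq_inv_mul]
    have hJDw : 𝒥 (0, ⁅w, b 2⁆) = ((𝒥 (0, ⁅w, b 2⁆)).1, nu • ⁅w, b 2⁆) := by
      rw [← hx2m]
    have m2 := L1' ⁅w, b 2⁆ (𝒥 (0, ⁅w, b 2⁆)).1 nu (R2 w) hJDw
    have hDDw : (⁅⁅w, b 2⁆, b 2⁆ : g) = w := by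
      refine sub_eq_zero.mp (EZ _ ?_ ?_ ?_) <;>
        simp only [map_sub, Finsupp.coe_sub, Finsupp.sub_apply, Finsupp.coe_add, Finsupp.add_apply, Finsupp.coe_smul, Finsupp.smul_apply, Finsupp.coe_zero, Finsupp.zero_apply, R0, R1, R2, hw2] <;> ring
    rw [hDDw, hJw] at m2
    have m2s := congrArg Prod.snd m2
    simp only [Prod.snd_add, Prod.smul_snd] at m2s
    have key : ((1 - nu*s3) + (nu+s3)*lam) • w = 0 := by
      linear_combination (norm := module) m2s
    have G : (1 - nu*s3) + (nu+s3)*lam = 0 := by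
      rcases smul_eq_zero.mp key with h'|h'
      · exact h'
      · exact absurd h' hw
    have hln : lam * nu = -1 := by linear_combination E1m/2 + G/2
    exact ⟨nu, hln, hx2m⟩
  -- apply the mirror chain to ustar and x1s
  obtain ⟨nu1, hnu1, EDxs'⟩ := mirror ustar ((-(1 + l^2)) • u) (-l) hxs0 hxs2 (by rw [hJ0xs])
  obtain ⟨nu2, hnu2, EDx1s'⟩ := mirror x1s ((-(1 + lam1^2)) • ⁅u, b 2⁆) (-lam1) hx1s0 hx1s2
    (by rw [hJ0x1s])
  have hnu1e : nu1 = -lam1 := by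
    apply mul_left_cancel₀ hl0
    linear_combination -hnu1 + hll
  have hnu2e : nu2 = -l := by
    apply mul_left_cancel₀ hlam10
    linear_combination -hnu2 + hll
  rw [hnu1e] at EDxs'
  rw [hnu2e] at EDx1s'
  have EDxs : (𝒥 (0, ⁅ustar, b 2⁆)).2 = (-lam1) • ⁅ustar, b 2⁆ := EDxs'
  have EDx1s : (𝒥 (0, ⁅x1s, b 2⁆)).2 = (-l) • ⁅x1s, b 2⁆ := EDx1s'
  -- endgame coordinates
  obtain ⟨X0, hX0def⟩ : ∃ x, b.repr ustar 0 = x := ⟨_, rfl⟩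
  obtain ⟨X1, hX1def⟩ : ∃ x, b.repr ustar 1 = x := ⟨_, rfl⟩
  obtain ⟨Y0, hY0def⟩ : ∃ x, b.repr x1s 0 = x := ⟨_, rfl⟩
  obtain ⟨Y1, hY1def⟩ : ∃ x, b.repr x1s 1 = x := ⟨_, rfl⟩
  obtain ⟨Dd, hDddef⟩ : ∃ x, x = X0*Y1 - X1*Y0 := ⟨_, rfl⟩
  have Exs : (𝒥 (0, ustar)).2 = (-l) • ustar := by rw [hJ0xs]
  have Ex1s : (𝒥 (0, x1s)).2 = (-lam1) • x1s := by rw [hJ0x1s]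
  -- Dd ≠ 0 : independence of ustar and x1s
  have hDd0 : Dd ≠ 0 := by
    intro hDd
    have v1 : Y0 • ustar = X0 • x1s := by
      refine sub_eq_zero.mp (EZ _ ?_ ?_ ?_) <;>
        simp only [map_sub, map_smul, Finsupp.coe_sub, Finsupp.sub_apply, Finsupp.coe_add, Finsupp.add_apply, Finsupp.coe_smul, Finsupp.smul_apply, Finsupp.coe_zero, Finsupp.zero_apply, smul_eq_mul, hX0def, hX1def, hY0def, hY1def,
          hxs2, hx1s2, mul_zero, sub_self]
      · ring
      · linear_combination -hDd + hDddef
    have v2 : Y1 • ustar = X1 • x1s := by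
      refine sub_eq_zero.mp (EZ _ ?_ ?_ ?_) <;>
        simp only [map_sub, map_smul, Finsupp.coe_sub, Finsupp.sub_apply, Finsupp.coe_add, Finsupp.add_apply, Finsupp.coe_smul, Finsupp.smul_apply, Finsupp.coe_zero, Finsupp.zero_apply, smul_eq_mul, hX0def, hX1def, hY0def, hY1def,
          hxs2, hx1s2, mul_zero, sub_self]
      · linear_combination hDd - hDddef
      · ring
    have w1 : Y0 • ((-(1 + l^2)) • u) = X0 • ((-(1 + lam1^2)) • ⁅u, b 2⁆) := by
      have t := congrArg (fun z => (𝒥 (0, z)).1) v1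
      simp only [JR1, Prod.smul_fst] at t
      rw [hJ0xs, hJ0x1s] at t
      simpa using t
    have w2 : Y1 • ((-(1 + l^2)) • u) = X1 • ((-(1 + lam1^2)) • ⁅u, b 2⁆) := by
      have t := congrArg (fun z => (𝒥 (0, z)).1) v2
      simp only [JR1, Prod.smul_fst] at t
      rw [hJ0xs, hJ0x1s] at t
      simpa using t
    have w10 := congrArg (fun z => b.repr z 0) w1
    have w11 := congrArg (fun z => b.repr z 1) w1
    have w20 := congrArg (fun z => b.repr z 0) w2
    have w21 := congrArg (fun z => b.repr z 1) w2
    simp only [map_smul, Finsupp.coe_sub, Finsupp.sub_apply, Finsupp.coe_add, Finsupp.add_apply, Finsupp.coe_smul, Finsupp.smul_apply, Finsupp.coe_zero, Finsupp.zero_apply, smul_eq_mul, R0, R1, hadef, hcdef] at w10 w11 w20 w21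
    have hX0 : X0 = 0 := by
      have k1 : (Y0 * (1 + l^2)) * a = (X0 * (1 + lam1^2)) * a := by linear_combination -w10
      have k2 : (Y0 * (1 + l^2)) * c = (-(X0 * (1 + lam1^2))) * c := by linear_combination -w11
      have h1' := mul_right_cancel₀ ha0 k1
      have h2' := mul_right_cancel₀ hc0 k2
      have : X0 * (1 + lam1^2) = 0 := by linarith
      rcases mul_eq_zero.mp this with h'|h'
      · exact h'
      · linarith [sq_nonneg lam1]
    have hX1 : X1 = 0 := by
      have k1 : (Y1 * (1 + l^2)) * a = (X1 * (1 + lam1^2)) * a := by linear_combination -w20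
      have k2 : (Y1 * (1 + l^2)) * c = (-(X1 * (1 + lam1^2))) * c := by linear_combination -w21
      have h1' := mul_right_cancel₀ ha0 k1
      have h2' := mul_right_cancel₀ hc0 k2
      have : X1 * (1 + lam1^2) = 0 := by linarith
      rcases mul_eq_zero.mp this with h'|h'
      · exact h'
      · linarith [sq_nonneg lam1]
    exact hxs0 (EZ _ (by rw [hX0def, hX0]) (by rw [hX1def, hX1]) hxs2)
  -- expansion identities
  have Id1 : Dd • (⁅ustar, b 2⁆ : g) = (X0*Y1 + X1*Y0) • ustar + (-(2*X0*X1)) • x1s := by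
    refine sub_eq_zero.mp (EZ _ ?_ ?_ ?_) <;>
      simp only [map_sub, map_add, map_smul, Finsupp.coe_sub, Finsupp.sub_apply, Finsupp.coe_add, Finsupp.add_apply, Finsupp.coe_smul, Finsupp.smul_apply, Finsupp.coe_zero, Finsupp.zero_apply, smul_eq_mul, R0, R1, R2, hX0def, hX1def,
        hY0def, hY1def, hxs2, hx1s2, mul_zero, add_zero, sub_self]
    · linear_combination X0 * hDddef
    · linear_combination -X1 * hDddef
  have t1 : Dd • ((-lam1) • (⁅ustar, b 2⁆ : g))
      = (X0*Y1 + X1*Y0) • ((-l) • ustar) + (-(2*X0*X1)) • ((-lam1) • x1s) := by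
    have t := congrArg (fun z => (𝒥 (0, z)).2) Id1
    simp only [JR1, JRadd, Prod.smul_snd, Prod.snd_add] at t
    rw [Exs, Ex1s, EDxs] at t
    exact t
  have key1 : ((X0*Y1 + X1*Y0) * (lam1 - l)) • ustar = 0 := by
    linear_combination (norm := module) -t1 - lam1 • Id1
  have hm1 : X0*Y1 + X1*Y0 = 0 := by
    rcases smul_eq_zero.mp key1 with h'|h'
    · rcases mul_eq_zero.mp h' with h''|h''
      · exact h''
      · exact absurd (by linarith : lam1 = l) hlne
    · exact absurd h' hxs0
  rw [hm1, zero_smul, zero_add] at Id1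
  have Id2 : Dd • (⁅x1s, b 2⁆ : g) = (2*Y0*Y1) • ustar := by
    refine sub_eq_zero.mp (EZ _ ?_ ?_ ?_) <;>
      simp only [map_sub, map_smul, Finsupp.coe_sub, Finsupp.sub_apply, Finsupp.coe_add, Finsupp.add_apply, Finsupp.coe_smul, Finsupp.smul_apply, Finsupp.coe_zero, Finsupp.zero_apply, smul_eq_mul, R0, R1, R2, hX0def, hX1def,
        hY0def, hY1def, hxs2, hx1s2, mul_zero, sub_self]
    · linear_combination Y0 * hDddef - Y0 * hm1
    · linear_combination -Y1 * hDddef - Y1 * hm1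
  -- bracket with q
  have hq1 : ⁅ustar, q⁆ = q3 • (⁅ustar, b 2⁆ : g) := by
    rw [BR ustar q, hxs2, hq3def]; simp
  have hq2 : ⁅x1s, q⁆ = q3 • (⁅x1s, b 2⁆ : g) := by
    rw [BR x1s q, hx1s2, hq3def]; simp
  have SS1 : l • x1s = q3 • (⁅ustar, b 2⁆ : g) := by rw [S1', hq1]
  have SS2 : q3 • (⁅x1s, b 2⁆ : g) = lam1 • ustar := by rw [← hq2, S2']
  have key2 : (l*Dd + 2*q3*X0*X1) • x1s = 0 := by
    linear_combination (norm := module) Dd • SS1 + q3 • Id1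
  have scal1 : l*Dd = -(2*q3*X0*X1) := by
    rcases smul_eq_zero.mp key2 with h'|h'
    · linarith
    · exact absurd h' hx1s0
  have key3 : (lam1*Dd - 2*q3*Y0*Y1) • ustar = 0 := by
    linear_combination (norm := module) q3 • Id2 - Dd • SS2
  have scal2 : lam1*Dd = 2*q3*Y0*Y1 := by
    rcases smul_eq_zero.mp key3 with h'|h'
    · linarith
    · exact absurd h' hxs0
  have e1 : (l*Dd)*(lam1*Dd) = (-(2*q3*X0*X1))*(2*q3*Y0*Y1) := by rw [scal1, scal2]
  have e3 : 4*(X0*X1*Y0*Y1) = -(Dd^2) := by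
    linear_combination (X0*Y1 + X1*Y0)*hm1 + (Dd + X0*Y1 - X1*Y0)*hDddef
  have final : Dd^2*(1+q3^2) = 0 := by
    linear_combination -e1 + q3^2*e3 + Dd^2*hll
  rcases mul_eq_zero.mp final with h'|h'
  · exact hDd0 ((pow_eq_zero_iff two_ne_zero).mp h')
  · linarith [sq_nonneg q3]
end

section
/- The Lie algebra so(3) × so(3) (equivalently so(4)) admits an integrable complex structure: the linear map 𝒥 determined by 𝒥(e₁₂,0) = (0,e₁₂), 𝒥(0,e₁₂) = (-e₁₂,0), 𝒥(e₁₃,0) = (e₂₃,0), 𝒥(e₂₃,0) = (-e₁₃,0), 𝒥(0,e₁₃) = (0,e₂₃), 𝒥(0,e₂₃) = (0,-e₁₃) satisfies 𝒥² = -id and has vanishing Nijenhuis tensor. -/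
set_option maxHeartbeats 1000000 in
theorem so3_product_explicit_integrable_complex_structure
    {g : Type*} [LieRing g] [LieAlgebra ℝ g]
    (b : Module.Basis (Fin 3) ℝ g)
    -- `b 0 = e₁₂`, `b 1 = e₁₃`, `b 2 = e₂₃`
    (h1 : ⁅b 0, b 2⁆ = b 1) (h2 : ⁅b 0, b 1⁆ = -b 2) (h3 : ⁅b 1, b 2⁆ = b 0) :
    ∃ 𝒥 : (g × g) →ₗ[ℝ] (g × g),
      𝒥 (b 0, 0) = (0, b 0) ∧ 𝒥 (0, b 0) = (-b 0, 0) ∧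
      𝒥 (b 1, 0) = (b 2, 0) ∧ 𝒥 (b 2, 0) = (-b 1, 0) ∧
      𝒥 (0, b 1) = (0, b 2) ∧ 𝒥 (0, b 2) = (0, -b 1) ∧
      (∀ x, 𝒥 (𝒥 x) = -x) ∧
      (∀ x y : g × g,
        ⁅x, y⁆ + 𝒥 ⁅𝒥 x, y⁆ + 𝒥 ⁅x, 𝒥 y⁆ - ⁅𝒥 x, 𝒥 y⁆ = 0) := by
  -- bracket table
  have h1' : ⁅b 2, b 0⁆ = -b 1 := by rw [← lie_skew, h1]
  have h2' : ⁅b 1, b 0⁆ = b 2 := by rw [← lie_skew, h2, neg_neg]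
  have h3' : ⁅b 2, b 1⁆ = -b 0 := by rw [← lie_skew, h3]
  set R : g →ₗ[ℝ] g := b.constr ℝ ![0, b 2, -b 1] with hR
  set P : g →ₗ[ℝ] g := b.constr ℝ ![b 0, 0, 0] with hP
  have hR0 : R (b 0) = 0 := by rw [hR, Module.Basis.constr_basis]; rfl
  have hR1 : R (b 1) = b 2 := by rw [hR, Module.Basis.constr_basis]; rfl
  have hR2 : R (b 2) = -b 1 := by rw [hR, Module.Basis.constr_basis]; rfl
  have hP0 : P (b 0) = b 0 := by rw [hP, Module.Basis.constr_basis]; rfl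
  have hP1 : P (b 1) = 0 := by rw [hP, Module.Basis.constr_basis]; rfl
  have hP2 : P (b 2) = 0 := by rw [hP, Module.Basis.constr_basis]; rfl
  clear_value R P
  set J : (g × g) →ₗ[ℝ] (g × g) :=
    ((R.comp (LinearMap.fst ℝ g g)) - (P.comp (LinearMap.snd ℝ g g))).prod
      ((P.comp (LinearMap.fst ℝ g g)) + (R.comp (LinearMap.snd ℝ g g))) with hJ
  have hJapp : ∀ x : g × g, J x = (R x.1 - P x.2, P x.1 + R x.2) := fun x => rfl
  clear_value J
  refine ⟨J, ?_, ?_, ?_, ?_, ?_, ?_, ?_, ?_⟩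
  · simp [hJapp, hR0, hP0]
  · simp [hJapp, hR0, hP0]
  · simp [hJapp, hR1, hP1]
  · simp [hJapp, hR2, hP2]
  · simp [hJapp, hR1, hP1]
  · simp [hJapp, hR2, hP2]
  · -- J² = -id
    have hRP : ∀ x, R (P x) = 0 := by
      have : R.comp P = 0 := by
        apply b.ext; intro i; fin_cases i <;>
          simp [hP0, hP1, hP2, hR0, hR1, hR2]
      intro x; exact congrFun (congrArg DFunLike.coe this) x
    have hPR : ∀ x, P (R x) = 0 := by
      have : P.comp R = 0 := by
        apply b.ext; intro i; fin_cases i <;>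
          simp [hP0, hP1, hP2, hR0, hR1, hR2]
      intro x; exact congrFun (congrArg DFunLike.coe this) x
    have hsq : ∀ x : g, R (R x) - P (P x) = -x := by
      have : R.comp R - P.comp P = -LinearMap.id := by
        apply b.ext; intro i; fin_cases i <;>
          simp [hP0, hP1, hP2, hR0, hR1, hR2]
      intro x
      have := congrFun (congrArg DFunLike.coe this) x
      simpa using this
    intro x
    simp only [hJapp]
    ext
    · simp only [map_sub, map_add, hRP, hPR, Prod.fst_neg]
      have := hsq x.1
      linear_combination (norm := abel) this
    · simp only [map_sub, map_add, hRP, hPR, Prod.snd_neg]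
      have := hsq x.2
      linear_combination (norm := abel) this
  · -- Nijenhuis
    have hJ1 : J (b 0, 0) = (0, b 0) := by simp [hJapp, hR0, hP0]
    have hJ2 : J (0, b 0) = (-b 0, 0) := by simp [hJapp, hR0, hP0]
    have hJ3 : J (b 1, 0) = (b 2, 0) := by simp [hJapp, hR1, hP1]
    have hJ4 : J (b 2, 0) = (-b 1, 0) := by simp [hJapp, hR2, hP2]
    have hJ5 : J (0, b 1) = (0, b 2) := by simp [hJapp, hR1, hP1]
    have hJ6 : J (0, b 2) = (0, -b 1) := by simp [hJapp, hR2, hP2]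
    have hbr : ∀ a c d e : g, ⁅((a, c) : g × g), (d, e)⁆ = (⁅a, d⁆, ⁅c, e⁆) := fun _ _ _ _ => rfl
    have hnegl : ∀ a : g, ((-a, (0:g)) : g × g) = -(a, 0) := fun a => by ext <;> simp
    have hnegr : ∀ a : g, (((0:g), -a) : g × g) = -(0, a) := fun a => by ext <;> simp
    have h00 : (((0:g), (0:g)) : g × g) = 0 := rfl
    have hBl : ∀ i : Fin 3, (b.prod b) (Sum.inl i) = (b i, 0) := fun i => by
      ext <;> simp
    have hBr : ∀ i : Fin 3, (b.prod b) (Sum.inr i) = (0, b i) := fun i => by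
      ext <;> simp
    intro x y
    set N : (g × g) →ₗ[ℝ] (g × g) →ₗ[ℝ] (g × g) :=
      LinearMap.mk₂ ℝ (fun x y => ⁅x, y⁆ + J ⁅J x, y⁆ + J ⁅x, J y⁆ - ⁅J x, J y⁆)
        (by intro m m' n; simp [add_lie, map_add, ← Prod.mk_add_mk]; abel)
        (by intro c m n; simp [smul_lie, map_smul, smul_add, smul_sub, ← Prod.smul_mk])
        (by intro m n n'; simp [lie_add, map_add, ← Prod.mk_add_mk]; abel)
        (by intro c m n; simp [lie_smul, map_smul, smul_add, smul_sub, ← Prod.smul_mk]) with hN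
    have hNzero : N = 0 := by
      apply (b.prod b).ext; intro i
      apply (b.prod b).ext; intro j
      simp only [hN, LinearMap.mk₂_apply, LinearMap.zero_apply]
      rcases i with i | i <;> rcases j with j | j <;>
        simp only [hBl, hBr] <;>
        fin_cases i <;> fin_cases j <;>
        · simp only [Fin.zero_eta, Fin.mk_one, Fin.reduceFinMk, Fin.isValue,
            hbr, lie_zero, zero_lie, lie_self, lie_neg, neg_lie, neg_neg,
            h1, h2, h3, h1', h2', h3', hnegl, hnegr, h00,
            hJ1, hJ2, hJ3, hJ4, hJ5, hJ6, map_neg, map_zero, neg_zero]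
          refine Prod.ext ?_ ?_ <;>
            simp [h1, h2, h3, h1', h2', h3', hJapp, hR0, hR1, hR2, hP0, hP1, hP2] <;> abel
    have := congrFun (congrArg DFunLike.coe (congrFun (congrArg DFunLike.coe hNzero) x)) y
    simpa [hN] using this
end
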